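/- arXiv:1406.3594 — 9 statements merged into one kernel-verified Lean document; each statement's English description precedes it below -/
import Mathlib

section
/- Let p be a prime, ε > 0, and let x ∈ (0,1) be irrational with x ∈ Bad_ε; set N = ⌊ε⁻¹⌋ + 1. Let q_n and q_{n+1} be the denominators of two consecutive convergents of the continued fraction expansion of x. Then for all integers a, b, writing r = |a·q_n + b·q_{n+1}|, one has r·|r|_p·‖r·x‖ ≤ 4·max(a², b²)·(N+1)·|r|_p. -/
open Matrix Filter

/-- The matrix `A_a = [[0,1],[1,a]]` associated to a letter `a`. -/
def Amat (a : ℕ) : Matrix (Fin 2) (Fin 2) ℤ := !![0, 1; 1, (a : ℤ)]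

/-- The matrix `A_u` associated to a finite word `u` (product of the `A_a`). -/
def Aword (u : List ℕ) : Matrix (Fin 2) (Fin 2) ℤ := (u.map Amat).prod

/-- The prefix of length `n` of an infinite word `w`. -/
def wordPrefix (w : ℕ → ℕ) (n : ℕ) : List ℕ := (List.range n).map w

/-- The left shift `T^m w` of an infinite word. -/
def shiftW (w : ℕ → ℕ) (m : ℕ) : ℕ → ℕ := fun i => w (m + i)

/-- Distance from a real number to the nearest integer. -/
noncomputable def distNearestInt (t : ℝ) : ℝ := |t - round t|

/-- `q ∈ PBad_ε` : `q` is a `p`-adically badly approximable vector with constant `ε`. -/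
def PBadE (p : ℕ) [Fact p.Prime] (ε : ℝ) (q : Fin 2 → ℚ_[p]) : Prop :=
  ∀ a b : ℤ, ¬(a = 0 ∧ b = 0) →
    ε / max ((a : ℝ) ^ 2) ((b : ℝ) ^ 2) ≤
      ‖(a : ℚ_[p]) * q 0 + (b : ℚ_[p]) * q 1‖ / max ‖q 0‖ ‖q 1‖

/-- An integer matrix viewed as a matrix over `ℚ_[p]`. -/
noncomputable def matQ (p : ℕ) [Fact p.Prime] (M : Matrix (Fin 2) (Fin 2) ℤ) :
    Matrix (Fin 2) (Fin 2) ℚ_[p] := M.map Int.cast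

/-- `(w, y) ∈ LMad_ε`. -/
def LMadE (p : ℕ) [Fact p.Prime] (ε : ℝ) (w : ℕ → ℕ) (y : Fin 2 → ℚ_[p]) : Prop :=
  (∀ n, 1 ≤ w n ∧ (w n : ℤ) ≤ ⌊ε⁻¹⌋ + 1) ∧
  ∀ n : ℕ, PBadE p ε (Matrix.mulVec (matQ p (Aword (wordPrefix w n))ᵀ) y)

/-- `(w, y) ∈ LMad`. -/
def LMad (p : ℕ) [Fact p.Prime] (w : ℕ → ℕ) (y : Fin 2 → ℚ_[p]) : Prop :=
  ∃ ε > 0, LMadE p ε w y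

/-- The projective distance `d` on nonzero vectors of `ℚ_[p]²`. -/
noncomputable def pdist (p : ℕ) [Fact p.Prime] (u v : Fin 2 → ℚ_[p]) : ℝ :=
  ‖u 0 * v 1 - u 1 * v 0‖ / (max ‖u 0‖ ‖u 1‖ * max ‖v 0‖ ‖v 1‖)

/-- `q ∈ B_k(w, y)` : `q` is `p^{-k}`-close to some `(A_{w_n})ᵀ y`. -/
def inBk (p : ℕ) [Fact p.Prime] (k : ℕ) (w : ℕ → ℕ) (y : Fin 2 → ℚ_[p])
    (q : Fin 2 → ℚ_[p]) : Prop :=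
  q ≠ 0 ∧ ∃ n : ℕ,
    pdist p q (Matrix.mulVec (matQ p (Aword (wordPrefix w n))ᵀ) y) ≤ (p : ℝ) ^ (-(k : ℤ))

/-- `U_k(w)` : set of reductions mod `p^k` of the matrices of all prefixes of `w`. -/
def Uk (p k : ℕ) (w : ℕ → ℕ) : Set (Matrix (Fin 2) (Fin 2) (ZMod (p ^ k))) :=
  { M | ∃ n : ℕ, M = (Aword (wordPrefix w n)).map Int.cast }

/-- The finite word `u` occurs in `w` at position `m`. -/
def occursAt (w : ℕ → ℕ) (u : List ℕ) (m : ℕ) : Prop :=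
  u = (List.range u.length).map fun i => w (m + i)

/-- `u` is a factor of the infinite word `w`. -/
def IsFactor (u : List ℕ) (w : ℕ → ℕ) : Prop := ∃ m, occursAt w u m

/-- `w` is recurrent: every factor occurs infinitely often. -/
def Recurrent (w : ℕ → ℕ) : Prop :=
  ∀ u : List ℕ, IsFactor u w → ∀ M : ℕ, ∃ m, M ≤ m ∧ occursAt w u m

/-- `w` is uniformly recurrent: recurrent with bounded gaps between occurrences. -/
def UniformlyRecurrent (w : ℕ → ℕ) : Prop :=
  Recurrent w ∧
    ∀ u : List ℕ, IsFactor u w →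
      ∃ d : ℕ, ∀ m : ℕ, ∃ m', m ≤ m' ∧ m' ≤ m + d ∧ occursAt w u m'

/-- The complexity `P(w, n)` : number of distinct factors of `w` of length `n`. -/
noncomputable def complexity (w : ℕ → ℕ) (n : ℕ) : ℕ :=
  Set.ncard { u : List ℕ | u.length = n ∧ IsFactor u w }

/-- `a` is the sequence of partial quotients of the continued fraction expansion of `x`,
obtained by iterating the Gauss map. -/
def IsCFSeq (x : ℝ) (a : ℕ → ℕ) : Prop :=
  ∃ ξ : ℕ → ℝ, ξ 0 = x ∧
    ∀ n, (0 < ξ n ∧ ξ n < 1) ∧ ((a n : ℤ) = ⌊(ξ n)⁻¹⌋) ∧ ξ (n + 1) = (ξ n)⁻¹ - (a n : ℝ)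

/-- `Q` is the (index-shifted) sequence of denominators of the convergents of the continued
fraction with partial quotients `a` : `Q (n+1)` is the paper's `q_n`. -/
def IsCFDen (a : ℕ → ℕ) (Q : ℕ → ℤ) : Prop :=
  Q 0 = 0 ∧ Q 1 = 1 ∧ ∀ n, Q (n + 2) = (a n : ℤ) * Q (n + 1) + Q n

/-- Auxiliary: numerators of convergents. -/
def Pseq (a : ℕ → ℕ) : ℕ → ℤ
  | 0 => 1
  | 1 => 0
  | (n+2) => (a n : ℤ) * Pseq a (n+1) + Pseq a n

/-- bound for `r·|r|_p·‖r x‖` when `r` is an integer combination of two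
consecutive convergent denominators of a `Bad_ε` number. -/
theorem stmt_0 (p : ℕ) [Fact p.Prime] (ε : ℝ) (hε : 0 < ε)
    (x : ℝ) (hxirr : Irrational x) (hx0 : 0 < x) (hx1 : x < 1)
    (hBad : ∀ q : ℕ, 1 ≤ q → ε ≤ (q : ℝ) * distNearestInt ((q : ℝ) * x))
    (a : ℕ → ℕ) (ha : IsCFSeq x a) (Q : ℕ → ℤ) (hQ : IsCFDen a Q)
    (n : ℕ) (u v : ℤ) (r : ℤ) (hr : r = |u * Q (n + 1) + v * Q (n + 2)|) :
    (r : ℝ) * ‖((r : ℤ) : ℚ_[p])‖ * distNearestInt ((r : ℝ) * x) ≤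
      4 * max ((u : ℝ) ^ 2) ((v : ℝ) ^ 2) * (((⌊ε⁻¹⌋ + 1 : ℤ) : ℝ) + 1) *
        ‖((r : ℤ) : ℚ_[p])‖ :=  by
  obtain ⟨ξ, hξ0, hξ⟩ := ha
  obtain ⟨hQ0, hQ1, hQrec⟩ := hQ
  set P := Pseq a with hP
  have hP0 : P 0 = 1 := rfl
  have hP1 : P 1 = 0 := rfl
  have hPrec : ∀ m, P (m+2) = (a m : ℤ) * P (m+1) + P m := fun m => rfl
  have ha1 : ∀ m, (1:ℤ) ≤ (a m : ℤ) := by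
    intro m
    obtain ⟨⟨hpos, hlt⟩, hfl, -⟩ := hξ m
    have h1 : (1:ℝ) < (ξ m)⁻¹ := by
      have := mul_inv_cancel₀ hpos.ne'
      nlinarith
    rw [hfl]
    exact Int.le_floor.mpr (by exact_mod_cast h1.le)
  have hQnn : ∀ m, 0 ≤ Q m ∧ 1 ≤ Q (m+1) := by
    intro m
    induction m with
    | zero => simp [hQ0, hQ1]
    | succ k ih =>
      refine ⟨le_trans zero_le_one ih.2, ?_⟩
      rw [hQrec]
      nlinarith [ha1 k, ih.1, ih.2]
  have hQmono : ∀ m, Q (m+1) ≤ Q (m+2) := by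
    intro m
    rw [hQrec]
    nlinarith [ha1 m, (hQnn m).1, (hQnn m).2]
  have hinv : ∀ m, ((Q (m+1) : ℝ) + Q m * ξ m) * x = (P (m+1) : ℝ) + P m * ξ m := by
    intro m
    induction m with
    | zero => simp [hQ0, hQ1, hP0, hP1, hξ0]
    | succ k ih =>
      obtain ⟨⟨hpos, -⟩, -, hxi⟩ := hξ k
      have hne : ξ k ≠ 0 := hpos.ne'
      rw [hQrec k, hPrec k, hxi]
      push_cast
      field_simp
      linear_combination ih
  have hdet : ∀ m, P (m+1) * Q m - P m * Q (m+1) = (-1:ℤ)^(m+1) := by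
    intro m
    induction m with
    | zero => simp [hQ0, hQ1, hP0, hP1]
    | succ k ih =>
      rw [hQrec k, hPrec k, pow_succ]
      linear_combination (-1:ℤ) * ih
  have happrox : ∀ m, |(Q (m+1) : ℝ) * x - P (m+1)| ≤ 1 / Q (m+2) := by
    intro m
    obtain ⟨⟨hpos, hlt⟩, hfl, -⟩ := hξ m
    have hQ1r : (1:ℝ) ≤ (Q (m+1) : ℝ) := by exact_mod_cast (hQnn m).2
    have hQ0r : (0:ℝ) ≤ (Q m : ℝ) := by exact_mod_cast (hQnn m).1
    have hQ2r : (1:ℝ) ≤ (Q (m+2) : ℝ) := by exact_mod_cast (hQnn (m+1)).2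
    have hdpos : (0:ℝ) < (Q (m+1) : ℝ) + Q m * ξ m := by nlinarith
    have key : (Q (m+1) : ℝ) * x - P (m+1)
        = ξ m * ((Q (m+1) : ℝ) * P m - P (m+1) * Q m) / ((Q (m+1) : ℝ) + Q m * ξ m) := by
      rw [eq_div_iff hdpos.ne']
      linear_combination (Q (m+1) : ℝ) * hinv m
    have habsZ : |P (m+1) * Q m - P m * Q (m+1)| = 1 := by
      rw [hdet m]
      simp [abs_pow]
    have habs : |(Q (m+1) : ℝ) * P m - P (m+1) * Q m| = 1 := by
      have : |(P (m+1) * Q m - P m * Q (m+1) : ℤ)| = (1:ℤ) := habsZ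
      have h2 : |((P (m+1) * Q m - P m * Q (m+1) : ℤ) : ℝ)| = 1 := by
        rw [← Int.cast_abs, this]; norm_num
      rw [← abs_neg]
      convert h2 using 2
      push_cast
      ring
    rw [key, abs_div, abs_mul, habs, abs_of_pos hpos, abs_of_pos hdpos, mul_one]
    rw [div_le_div_iff₀ hdpos (by linarith)]
    have hflle : (a m : ℝ) ≤ (ξ m)⁻¹ := by
      have : ((a m : ℤ) : ℝ) ≤ (ξ m)⁻¹ := by rw [hfl]; exact Int.floor_le _
      exact_mod_cast this
    have hax : ξ m * (a m : ℝ) ≤ 1 := by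
      have := mul_inv_cancel₀ hpos.ne'
      nlinarith
    have hQ2eq : (Q (m+2) : ℝ) = (a m : ℝ) * Q (m+1) + Q m := by
      rw [hQrec m]; push_cast; ring
    rw [hQ2eq]
    nlinarith
  -- main part
  rcases eq_or_ne r 0 with hr0 | hr0
  · subst hr0
    simp
  · have hrpos : 0 < r := by
      rcases (abs_nonneg (u * Q (n + 1) + v * Q (n + 2))).lt_or_eq with h | h
      · omega
      · omega
    set M : ℝ := max |(u:ℝ)| |(v:ℝ)| with hM
    have hMnn : 0 ≤ M := le_trans (abs_nonneg _) (le_max_left _ _)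
    have hQ2r : (1:ℝ) ≤ (Q (n+2) : ℝ) := by exact_mod_cast (hQnn (n+1)).2
    have hQ3r : (1:ℝ) ≤ (Q (n+3) : ℝ) := by exact_mod_cast (hQnn (n+2)).2
    have hQ23 : (Q (n+2) : ℝ) ≤ (Q (n+3) : ℝ) := by exact_mod_cast hQmono (n+1)
    have hQ1r : (0:ℝ) ≤ (Q (n+1) : ℝ) := by
      have := (hQnn n).2; exact_mod_cast le_trans zero_le_one this
    have hQ12 : (Q (n+1) : ℝ) ≤ (Q (n+2) : ℝ) := by exact_mod_cast hQmono n
    have hrle : (r : ℝ) ≤ 2 * M * Q (n+2) := by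
      have : (r : ℝ) = |(u:ℝ) * Q (n+1) + (v:ℝ) * Q (n+2)| := by
        rw [hr]; push_cast; ring_nf
      rw [this]
      have h1 := abs_add_le ((u:ℝ) * Q (n+1)) ((v:ℝ) * Q (n+2))
      rw [abs_mul, abs_mul, abs_of_nonneg hQ1r, abs_of_nonneg (by linarith : (0:ℝ) ≤ (Q (n+2):ℝ))] at h1
      have hu : |(u:ℝ)| ≤ M := le_max_left _ _
      have hv : |(v:ℝ)| ≤ M := le_max_right _ _
      nlinarith [abs_nonneg (u:ℝ), abs_nonneg (v:ℝ)]
    have hdistle : distNearestInt ((r : ℝ) * x) ≤ 2 * M / Q (n+2) := by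
      have hEx : |((u * Q (n + 1) + v * Q (n + 2) : ℤ) : ℝ) * x
          - ((u * P (n + 1) + v * P (n + 2) : ℤ) : ℝ)| ≤ 2 * M / Q (n+2) := by
        have h1 := happrox n
        have h2 := happrox (n+1)
        have hsum : ((u * Q (n + 1) + v * Q (n + 2) : ℤ) : ℝ) * x
            - ((u * P (n + 1) + v * P (n + 2) : ℤ) : ℝ)
            = (u:ℝ) * ((Q (n+1) : ℝ) * x - P (n+1)) + (v:ℝ) * ((Q (n+2) : ℝ) * x - P (n+2)) := by
          push_cast
          ring
        rw [hsum]
        have h3 := abs_add_le ((u:ℝ) * ((Q (n+1) : ℝ) * x - P (n+1)))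
          ((v:ℝ) * ((Q (n+2) : ℝ) * x - P (n+2)))
        rw [abs_mul, abs_mul] at h3
        have hu : |(u:ℝ)| ≤ M := le_max_left _ _
        have hv : |(v:ℝ)| ≤ M := le_max_right _ _
        have h13 : |(Q (n+1) : ℝ) * x - P (n+1)| ≤ 1 / Q (n+2) := h1
        have h23 : |(Q (n+2) : ℝ) * x - P (n+2)| ≤ 1 / Q (n+2) := by
          refine le_trans h2 ?_
          apply div_le_div_of_nonneg_left one_pos.le (by linarith) hQ23
        have hA : |(u:ℝ)| * |(Q (n+1) : ℝ) * x - P (n+1)| ≤ M * (1 / Q (n+2)) :=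
          mul_le_mul hu h13 (abs_nonneg _) hMnn
        have hB : |(v:ℝ)| * |(Q (n+2) : ℝ) * x - P (n+2)| ≤ M * (1 / Q (n+2)) :=
          mul_le_mul hv h23 (abs_nonneg _) hMnn
        have : M * (1 / Q (n+2)) + M * (1 / Q (n+2)) = 2 * M / Q (n+2) := by ring
        linarith
      rcases le_or_gt 0 (u * Q (n + 1) + v * Q (n + 2)) with hepos | heneg
      · have hre : (r : ℝ) = ((u * Q (n + 1) + v * Q (n + 2) : ℤ) : ℝ) := by
          have : r = u * Q (n + 1) + v * Q (n + 2) := by rw [hr, abs_of_nonneg hepos]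
          exact_mod_cast congrArg (Int.cast : ℤ → ℝ) this
        calc distNearestInt ((r : ℝ) * x)
            ≤ |(r : ℝ) * x - ((u * P (n + 1) + v * P (n + 2) : ℤ) : ℝ)| :=
              round_le _ (u * P (n + 1) + v * P (n + 2))
          _ ≤ 2 * M / Q (n+2) := by rw [hre]; exact hEx
      · have hre : (r : ℝ) = -((u * Q (n + 1) + v * Q (n + 2) : ℤ) : ℝ) := by
          have : r = -(u * Q (n + 1) + v * Q (n + 2)) := by rw [hr, abs_of_neg heneg]
          rw [show ((r:ℤ):ℝ) = ((-(u * Q (n + 1) + v * Q (n + 2)) : ℤ) : ℝ) from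
            congrArg (Int.cast : ℤ → ℝ) this]
          push_cast
          ring
        calc distNearestInt ((r : ℝ) * x)
            ≤ |(r : ℝ) * x - ((-(u * P (n + 1) + v * P (n + 2)) : ℤ) : ℝ)| :=
              round_le _ (-(u * P (n + 1) + v * P (n + 2)))
          _ = |((u * Q (n + 1) + v * Q (n + 2) : ℤ) : ℝ) * x
              - ((u * P (n + 1) + v * P (n + 2) : ℤ) : ℝ)| := by
              rw [hre, ← abs_neg]
              congr 1
              push_cast
              ring
          _ ≤ 2 * M / Q (n+2) := hEx
    have hdnn : 0 ≤ distNearestInt ((r : ℝ) * x) := abs_nonneg _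
    have hrnn : (0:ℝ) ≤ (r : ℝ) := by exact_mod_cast hrpos.le
    have hmain : (r : ℝ) * distNearestInt ((r : ℝ) * x) ≤ 4 * M ^ 2 := by
      have h1 : (r : ℝ) * distNearestInt ((r : ℝ) * x) ≤ (2 * M * Q (n+2)) * (2 * M / Q (n+2)) :=
        mul_le_mul hrle hdistle hdnn (by positivity)
      have h2 : (2 * M * (Q (n+2):ℝ)) * (2 * M / Q (n+2)) = 4 * M ^ 2 := by
        field_simp
        ring
      linarith [h1, h2.le]
    have hM2 : M ^ 2 = max ((u : ℝ) ^ 2) ((v : ℝ) ^ 2) := by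
      rcases le_total |(u:ℝ)| |(v:ℝ)| with h | h
      · rw [hM, max_eq_right h, max_eq_right, sq_abs]
        have := pow_le_pow_left₀ (abs_nonneg (u:ℝ)) h 2
        rwa [sq_abs, sq_abs] at this
      · rw [hM, max_eq_left h, max_eq_left, sq_abs]
        have := pow_le_pow_left₀ (abs_nonneg (v:ℝ)) h 2
        rwa [sq_abs, sq_abs] at this
    have hN : (1:ℝ) ≤ ((⌊ε⁻¹⌋ + 1 : ℤ) : ℝ) + 1 := by
      have h0 : (0:ℤ) ≤ ⌊ε⁻¹⌋ := Int.floor_nonneg.mpr (by positivity)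
      have : (0:ℝ) ≤ ((⌊ε⁻¹⌋ : ℤ) : ℝ) := by exact_mod_cast h0
      push_cast
      linarith
    have hmaxnn : 0 ≤ max ((u : ℝ) ^ 2) ((v : ℝ) ^ 2) :=
      le_trans (sq_nonneg _) (le_max_left _ _)
    have hfinal : (r : ℝ) * distNearestInt ((r : ℝ) * x)
        ≤ 4 * max ((u : ℝ) ^ 2) ((v : ℝ) ^ 2) * (((⌊ε⁻¹⌋ + 1 : ℤ) : ℝ) + 1) := by
      rw [← hM2] at hmaxnn ⊢
      nlinarith
    calc (r : ℝ) * ‖((r : ℤ) : ℚ_[p])‖ * distNearestInt ((r : ℝ) * x)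
        = ((r : ℝ) * distNearestInt ((r : ℝ) * x)) * ‖((r : ℤ) : ℚ_[p])‖ := by ring
      _ ≤ (4 * max ((u : ℝ) ^ 2) ((v : ℝ) ^ 2) * (((⌊ε⁻¹⌋ + 1 : ℤ) : ℝ) + 1)) * ‖((r : ℤ) : ℚ_[p])‖ :=
          mul_le_mul_of_nonneg_right hfinal (norm_nonneg _)
end

section
/- Let p be a prime and x ∈ (0,1) irrational with x ∈ Mad_δ for some δ > 0, with continued fraction word w_CF(x) and convergent denominators q_n. Suppose (n_k) is a strictly increasing sequence of natural numbers, w an infinite word over ℕ, and y = (y₁,y₂) ∈ ℚ_p² with max(|y₁|_p,|y₂|_p) = 1, such that: (i) the shifted words T^{n_k} w_CF(x) converge to w pointwise, and (ii) the vectors obtained from (q_{n_k−1}, q_{n_k}) ∈ ℤ² ⊆ ℚ_p² by multiplying with the power of p that makes their maximum p-adic absolute value equal to 1 converge to y in ℚ_p². Then there exists ε > 0 such that (w, y) ∈ LMad_ε. -/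
open Matrix Filter

def rec2 (a : ℕ → ℕ) : ℕ → ℤ
  | 0 => 1
  | 1 => 0
  | (n+2) => (a n : ℤ) * rec2 a (n+1) + rec2 a n

section CF
variable (x : ℝ) (a : ℕ → ℕ) (ξ : ℕ → ℝ) (Q : ℕ → ℤ)
variable (hx0 : ξ 0 = x)
variable (hpos : ∀ n, 0 < ξ n) (hlt : ∀ n, ξ n < 1)
variable (hfl : ∀ n, (a n : ℤ) = ⌊(ξ n)⁻¹⌋)
variable (hrec : ∀ n, ξ (n + 1) = (ξ n)⁻¹ - (a n : ℝ))
variable (hQ0 : Q 0 = 0) (hQ1 : Q 1 = 1)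
variable (hQr : ∀ n, Q (n + 2) = (a n : ℤ) * Q (n + 1) + Q n)

include hpos hlt hfl in
lemma a_one_le : ∀ n, 1 ≤ a n := by
  intro n
  have h1 : (1 : ℝ) < (ξ n)⁻¹ := (one_lt_inv₀ (hpos n)).mpr (hlt n)
  have : (1 : ℤ) ≤ (a n : ℤ) := by
    rw [hfl n]; exact Int.le_floor.mpr (by exact_mod_cast h1.le)
  exact_mod_cast this

include hpos hlt hfl hQ0 hQ1 hQr in
lemma Q_base : ∀ n, 0 ≤ Q n ∧ 1 ≤ Q (n + 1) := by
  intro n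
  induction n with
  | zero => exact ⟨by rw [hQ0], by rw [hQ1]⟩
  | succ n ih =>
    refine ⟨by linarith [ih.2], ?_⟩
    have ha := a_one_le a ξ hpos hlt hfl n
    have : (1:ℤ) ≤ (a n : ℤ) := by exact_mod_cast ha
    have := hQr n
    nlinarith [ih.1, ih.2]

include hpos hlt hfl hQ0 hQ1 hQr in
lemma Q_mono : ∀ n, Q n ≤ Q (n + 1) := by
  intro n
  rcases n with _ | n
  · rw [hQ0, hQ1]; omega
  · have ha : (1:ℤ) ≤ (a n : ℤ) := by exact_mod_cast a_one_le a ξ hpos hlt hfl n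
    have h1 := Q_base a ξ Q hpos hlt hfl hQ0 hQ1 hQr n
    have := hQr n
    nlinarith

include hpos hlt hfl hQ0 hQ1 hQr in
lemma Q_ge : ∀ n : ℕ, (n : ℤ) ≤ Q (n + 1) := by
  intro n
  induction n with
  | zero => rw [hQ1]; omega
  | succ n ih =>
    have ha : (1:ℤ) ≤ (a n : ℤ) := by exact_mod_cast a_one_le a ξ hpos hlt hfl n
    have h1 := Q_base a ξ Q hpos hlt hfl hQ0 hQ1 hQr n
    have h2 := (Q_base a ξ Q hpos hlt hfl hQ0 hQ1 hQr (n+1)).1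
    have := hQr n
    rcases Nat.eq_zero_or_pos n with h | h
    · subst h
      have h4 := hQr 0
      rw [hQ0, hQ1] at h4
      norm_num at h4 ⊢
      omega
    · have h3 : (1:ℤ) ≤ Q n := by
        obtain ⟨m, rfl⟩ := Nat.exists_eq_succ_of_ne_zero h.ne'
        exact (Q_base a ξ Q hpos hlt hfl hQ0 hQ1 hQr m).2
      push_cast
      nlinarith

include hQ0 hQ1 hQr in
lemma Q_cop : ∀ n, IsCoprime (Q n) (Q (n + 1)) := by
  intro n
  induction n with
  | zero => rw [hQ0, hQ1]; exact isCoprime_zero_left.mpr isUnit_one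
  | succ n ih =>
    rw [hQr n]
    have h2 : (a n : ℤ) * Q (n+1) + Q n = Q n + Q (n+1) * (a n) := by ring
    rw [h2]
    exact ih.symm.add_mul_left_right (a n) |>.symm |>.symm
end CF

section CF2
variable (x : ℝ) (a : ℕ → ℕ) (ξ : ℕ → ℝ) (Q : ℕ → ℤ)
variable (hx0 : ξ 0 = x)
variable (hpos : ∀ n, 0 < ξ n) (hlt : ∀ n, ξ n < 1)
variable (hfl : ∀ n, (a n : ℤ) = ⌊(ξ n)⁻¹⌋)
variable (hrec : ∀ n, ξ (n + 1) = (ξ n)⁻¹ - (a n : ℝ))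
variable (hQ0 : Q 0 = 0) (hQ1 : Q 1 = 1)
variable (hQr : ∀ n, Q (n + 2) = (a n : ℤ) * Q (n + 1) + Q n)

lemma rec2_succ (n : ℕ) : rec2 a (n+2) = (a n : ℤ) * rec2 a (n+1) + rec2 a n := rfl

include hx0 hpos hrec hQ0 hQ1 hQr in
lemma E_step : ∀ n, ((Q (n+2) : ℝ) * x - (rec2 a (n+2) : ℝ))
    = -ξ (n+1) * ((Q (n+1) : ℝ) * x - (rec2 a (n+1) : ℝ)) := by
  have hErec : ∀ n : ℕ, ((Q (n+2) : ℝ) * x - (rec2 a (n+2) : ℝ))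
      = (a n : ℝ) * ((Q (n+1) : ℝ) * x - (rec2 a (n+1) : ℝ))
        + ((Q n : ℝ) * x - (rec2 a n : ℝ)) := by
    intro n
    rw [hQr n, rec2_succ]
    push_cast
    ring
  intro n
  induction n with
  | zero =>
    have hne : ξ 0 ≠ 0 := (hpos 0).ne'
    have hne' : x ≠ 0 := hx0 ▸ hne
    rw [hErec 0, hrec 0, hx0, hQ0, hQ1]
    simp only [rec2]
    push_cast
    field_simp
    ring
  | succ n ih =>
    have hne : ξ (n+1) ≠ 0 := (hpos (n+1)).ne'
    rw [hErec (n+1), hrec (n+1)]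
    field_simp
    linear_combination ih

include hQ0 hQ1 hQr in
lemma det_id : ∀ n, Q (n+1) * rec2 a (n+2) - Q (n+2) * rec2 a (n+1) = (-1)^n := by
  intro n
  induction n with
  | zero => rw [hQr 0, rec2_succ, hQ0, hQ1]; simp [rec2]
  | succ n ih =>
    rw [hQr (n+1), rec2_succ a (n+1)]
    ring_nf
    ring_nf at ih
    linear_combination (-(1:ℤ)) * ih

include hx0 hpos hlt hfl hrec hQ0 hQ1 hQr in
lemma E_abs : ∀ n, |(Q (n+1) : ℝ) * x - (rec2 a (n+1) : ℝ)|
    * ((Q (n+2) : ℝ) + ξ (n+1) * (Q (n+1) : ℝ)) = 1 := by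
  intro n
  have hdet := det_id a Q hQ0 hQ1 hQr n
  have hstep := E_step x a ξ Q hx0 hpos hrec hQ0 hQ1 hQr n
  have hid : ((Q (n+1) : ℝ) * x - (rec2 a (n+1) : ℝ))
      * ((Q (n+2) : ℝ) + ξ (n+1) * (Q (n+1) : ℝ)) = ((-1)^n : ℝ) := by
    have hc : ((Q (n+1) * rec2 a (n+2) - Q (n+2) * rec2 a (n+1) : ℤ) : ℝ) = ((-1)^n : ℤ) := by
      exact_mod_cast congrArg (Int.cast : ℤ → ℝ) hdet
    push_cast at hc
    linear_combination hc + (Q (n+1) : ℝ) * hstep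
  have h1 : (0:ℝ) < (Q (n+2) : ℝ) + ξ (n+1) * (Q (n+1) : ℝ) := by
    have hb1 : (1:ℤ) ≤ Q (n+2) := (Q_base a ξ Q hpos hlt hfl hQ0 hQ1 hQr (n+1)).2
    have hb2 : (1:ℤ) ≤ Q (n+1) := (Q_base a ξ Q hpos hlt hfl hQ0 hQ1 hQr n).2
    have := hpos (n+1)
    have hb1' : (1:ℝ) ≤ (Q (n+2) : ℝ) := by exact_mod_cast hb1
    have hb2' : (1:ℝ) ≤ (Q (n+1) : ℝ) := by exact_mod_cast hb2
    nlinarith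
  calc |(Q (n+1) : ℝ) * x - (rec2 a (n+1) : ℝ)| * ((Q (n+2) : ℝ) + ξ (n+1) * (Q (n+1) : ℝ))
      = |((Q (n+1) : ℝ) * x - (rec2 a (n+1) : ℝ)) * ((Q (n+2) : ℝ) + ξ (n+1) * (Q (n+1) : ℝ))| := by
        rw [abs_mul, abs_of_pos h1]
    _ = |((-1)^n : ℝ)| := by rw [hid]
    _ = 1 := by simp [abs_pow]

include hx0 hpos hlt hfl hrec hQ0 hQ1 hQr in
lemma E_bound : ∀ m, |(Q m : ℝ) * x - (rec2 a m : ℝ)| ≤ 1 / (Q (m+1) : ℝ) := by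
  intro m
  match m with
  | 0 => simp [hQ0, hQ1, rec2]
  | (n+1) =>
    show |(Q (n+1) : ℝ) * x - (rec2 a (n+1) : ℝ)| ≤ 1 / (Q (n+2) : ℝ)
    have habs := E_abs x a ξ Q hx0 hpos hlt hfl hrec hQ0 hQ1 hQr n
    have hb1 : (1:ℝ) ≤ (Q (n+2) : ℝ) := by
      exact_mod_cast (Q_base a ξ Q hpos hlt hfl hQ0 hQ1 hQr (n+1)).2
    have hb2 : (0:ℝ) ≤ (Q (n+1) : ℝ) := by
      exact_mod_cast (Q_base a ξ Q hpos hlt hfl hQ0 hQ1 hQr (n+1)).1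
    have hx := (hpos (n+1)).le
    rw [le_div_iff₀ (by linarith : (0:ℝ) < (Q (n+2) : ℝ))]
    nlinarith [mul_nonneg (mul_nonneg (abs_nonneg ((Q (n+1) : ℝ) * x - (rec2 a (n+1) : ℝ))) hx) hb2]
end CF2

lemma dn_le_int (t : ℝ) (z : ℤ) : distNearestInt t ≤ |t - z| := round_le t z

lemma dn_neg (t : ℝ) : distNearestInt (-t) = distNearestInt t := by
  unfold distNearestInt
  rw [abs_sub_round_eq_min, abs_sub_round_eq_min]
  by_cases h : Int.fract t = 0
  · rw [Int.fract_neg_eq_zero.mpr h, h]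
  · rw [Int.fract_neg h]
    rw [min_comm]
    norm_num

section KEY
variable (p : ℕ) [Fact p.Prime] (x : ℝ) (δ : ℝ)
variable (hδ : 0 < δ)
variable (hMad : ∀ q : ℕ, 1 ≤ q →
      δ ≤ (q : ℝ) * ‖((q : ℕ) : ℚ_[p])‖ * distNearestInt ((q : ℝ) * x))
variable (a : ℕ → ℕ) (ξ : ℕ → ℝ) (Q : ℕ → ℤ)
variable (hx0 : ξ 0 = x)
variable (hpos : ∀ n, 0 < ξ n) (hlt : ∀ n, ξ n < 1)
variable (hfl : ∀ n, (a n : ℤ) = ⌊(ξ n)⁻¹⌋)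
variable (hrec : ∀ n, ξ (n + 1) = (ξ n)⁻¹ - (a n : ℝ))
variable (hQ0 : Q 0 = 0) (hQ1 : Q 1 = 1)
variable (hQr : ∀ n, Q (n + 2) = (a n : ℤ) * Q (n + 1) + Q n)

include hδ hMad hx0 hpos hlt hfl hrec hQ0 hQ1 hQr in
lemma key_norm : ∀ (m : ℕ) (A B : ℤ), ¬(A = 0 ∧ B = 0) → A * Q m + B * Q (m+1) ≠ 0 →
    δ / 4 / max ((A:ℝ)^2) ((B:ℝ)^2) ≤ ‖((A * Q m + B * Q (m+1) : ℤ) : ℚ_[p])‖ := by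
  intro m A B hAB hS0
  set S : ℤ := A * Q m + B * Q (m+1) with hSdef
  set q : ℕ := S.natAbs with hqdef
  have hq1 : 1 ≤ q := Int.natAbs_pos.mpr hS0
  have h0 := hMad q hq1
  have hqR : ((q : ℕ) : ℝ) = |(S : ℝ)| := by
    rw [hqdef]
    push_cast [Nat.cast_natAbs]
    ring
  have hqp : ‖((q : ℕ) : ℚ_[p])‖ = ‖(S : ℚ_[p])‖ := by
    rcases le_or_gt 0 S with h | h
    · have h3 : ((q:ℕ) : ℤ) = S := by rw [hqdef]; omega
      have h2 : ((q : ℕ) : ℚ_[p]) = (S : ℚ_[p]) := by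
        exact_mod_cast congrArg (fun z : ℤ => (z : ℚ_[p])) h3
      rw [h2]
    · have h3 : ((q:ℕ) : ℤ) = -S := by rw [hqdef]; omega
      have h2 : ((q : ℕ) : ℚ_[p]) = ((-S : ℤ) : ℚ_[p]) := by
        exact_mod_cast congrArg (fun z : ℤ => (z : ℚ_[p])) h3
      push_cast at h2
      rw [h2, norm_neg]
  have hdneq : distNearestInt (((q : ℕ) : ℝ) * x) = distNearestInt ((S : ℝ) * x) := by
    rw [hqR]
    rcases abs_cases (S : ℝ) with ⟨h, _⟩ | ⟨h, _⟩
    · rw [h]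
    · rw [h, neg_mul, dn_neg]
  have hEm := E_bound x a ξ Q hx0 hpos hlt hfl hrec hQ0 hQ1 hQr m
  have hEm1 : |(Q (m+1) : ℝ) * x - (rec2 a (m+1) : ℝ)| ≤ 1 / (Q (m+2) : ℝ) :=
    E_bound x a ξ Q hx0 hpos hlt hfl hrec hQ0 hQ1 hQr (m+1)
  set M : ℝ := max |(A:ℝ)| |(B:ℝ)| with hMdef
  have hM0 : 0 < M := by
    rcases not_and_or.mp hAB with h | h
    · have h2 : (0:ℝ) < |(A:ℝ)| := by
        simp only [abs_pos]
        exact_mod_cast h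
      exact lt_of_lt_of_le h2 (le_max_left _ _)
    · have h2 : (0:ℝ) < |(B:ℝ)| := by
        simp only [abs_pos]
        exact_mod_cast h
      exact lt_of_lt_of_le h2 (le_max_right _ _)
  have hmaxsq : max ((A:ℝ)^2) ((B:ℝ)^2) = M^2 := by
    rcases le_total |(A:ℝ)| |(B:ℝ)| with h | h
    · rw [hMdef, max_eq_right h, max_eq_right]
      · rw [sq_abs]
      · rw [← sq_abs (A:ℝ), ← sq_abs (B:ℝ)]
        exact pow_le_pow_left₀ (abs_nonneg _) h 2
    · rw [hMdef, max_eq_left h, max_eq_left]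
      · rw [sq_abs]
      · rw [← sq_abs (A:ℝ), ← sq_abs (B:ℝ)]
        exact pow_le_pow_left₀ (abs_nonneg _) h 2
  have hQm0 : (0:ℝ) ≤ (Q m : ℝ) := by
    exact_mod_cast (Q_base a ξ Q hpos hlt hfl hQ0 hQ1 hQr m).1
  have hQm1 : (1:ℝ) ≤ (Q (m+1) : ℝ) := by
    exact_mod_cast (Q_base a ξ Q hpos hlt hfl hQ0 hQ1 hQr m).2
  have hQm2 : (1:ℝ) ≤ (Q (m+2) : ℝ) := by
    exact_mod_cast (Q_base a ξ Q hpos hlt hfl hQ0 hQ1 hQr (m+1)).2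
  have hQmono : (Q m : ℝ) ≤ (Q (m+1) : ℝ) := by
    exact_mod_cast Q_mono a ξ Q hpos hlt hfl hQ0 hQ1 hQr m
  have hQmono2 : (Q (m+1) : ℝ) ≤ (Q (m+2) : ℝ) := by
    exact_mod_cast Q_mono a ξ Q hpos hlt hfl hQ0 hQ1 hQr (m+1)
  have hA_le : |(A:ℝ)| ≤ M := le_max_left _ _
  have hB_le : |(B:ℝ)| ≤ M := le_max_right _ _
  have hSabs : |(S:ℝ)| ≤ 2 * M * (Q (m+1) : ℝ) := by
    have h1 : (S:ℝ) = (A:ℝ) * (Q m : ℝ) + (B:ℝ) * (Q (m+1) : ℝ) := by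
      rw [hSdef]; push_cast; ring
    have h2 := abs_add_le ((A:ℝ) * (Q m : ℝ)) ((B:ℝ) * (Q (m+1) : ℝ))
    rw [abs_mul, abs_mul, abs_of_nonneg hQm0,
      abs_of_nonneg (by linarith : (0:ℝ) ≤ (Q (m+1):ℝ))] at h2
    have t1 : |(A:ℝ)| * (Q m : ℝ) ≤ M * (Q (m+1) : ℝ) :=
      mul_le_mul hA_le hQmono hQm0 hM0.le
    have t2 : |(B:ℝ)| * (Q (m+1) : ℝ) ≤ M * (Q (m+1) : ℝ) :=
      mul_le_mul_of_nonneg_right hB_le (by linarith)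
    rw [h1]
    linarith
  have hdn : distNearestInt ((S:ℝ) * x) ≤ 2 * M / (Q (m+1) : ℝ) := by
    have hz := dn_le_int ((S:ℝ) * x) (A * rec2 a m + B * rec2 a (m+1))
    have hP : (S:ℝ) * x - ((A * rec2 a m + B * rec2 a (m+1) : ℤ) : ℝ)
        = (A:ℝ) * ((Q m : ℝ) * x - (rec2 a m : ℝ))
          + (B:ℝ) * ((Q (m+1) : ℝ) * x - (rec2 a (m+1) : ℝ)) := by
      rw [hSdef]; push_cast; ring
    rw [hP] at hz
    have h2 := abs_add_le ((A:ℝ) * ((Q m : ℝ) * x - (rec2 a m : ℝ)))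
      ((B:ℝ) * ((Q (m+1) : ℝ) * x - (rec2 a (m+1) : ℝ)))
    rw [abs_mul, abs_mul] at h2
    have t1 : |(A:ℝ)| * |(Q m : ℝ) * x - (rec2 a m : ℝ)| ≤ M * (1 / (Q (m+1) : ℝ)) :=
      mul_le_mul hA_le hEm (abs_nonneg _) hM0.le
    have t2 : |(B:ℝ)| * |(Q (m+1) : ℝ) * x - (rec2 a (m+1) : ℝ)| ≤ M * (1 / (Q (m+2) : ℝ)) :=
      mul_le_mul hB_le hEm1 (abs_nonneg _) hM0.le
    have t3 : M * (1 / (Q (m+2) : ℝ)) ≤ M * (1 / (Q (m+1) : ℝ)) := by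
      have : 1 / (Q (m+2) : ℝ) ≤ 1 / (Q (m+1) : ℝ) :=
        one_div_le_one_div_of_le (by linarith) hQmono2
      exact mul_le_mul_of_nonneg_left this hM0.le
    have h4 : 2 * M / (Q (m+1) : ℝ) = M * (1 / (Q (m+1) : ℝ)) + M * (1 / (Q (m+1) : ℝ)) := by
      ring
    rw [h4]
    linarith
  set N : ℝ := ‖(S : ℚ_[p])‖ with hNdef
  have hN0 : (0:ℝ) ≤ N := norm_nonneg _
  rw [hdneq, hqp, hqR] at h0
  have hdn0 : 0 ≤ distNearestInt ((S:ℝ) * x) := abs_nonneg _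
  have hprod : |(S:ℝ)| * distNearestInt ((S:ℝ) * x) ≤ 4 * M^2 := by
    have h5 := mul_le_mul hSabs hdn hdn0 (by positivity : (0:ℝ) ≤ 2 * M * (Q (m+1) : ℝ))
    have h6 : 2 * M * (Q (m+1) : ℝ) * (2 * M / (Q (m+1) : ℝ)) = 4 * M^2 := by
      field_simp
      ring
    linarith
  have h7 : δ ≤ 4 * M^2 * N := by
    nlinarith [mul_le_mul_of_nonneg_right hprod hN0, abs_nonneg (S:ℝ)]
  rw [hmaxsq, div_div, div_le_iff₀ (by positivity : (0:ℝ) < 4 * M^2)]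
  linarith

include hδ hMad hx0 hpos hlt hfl hrec hQ0 hQ1 hQr in
lemma a_le_inv_delta : ∀ n, (a n : ℝ) ≤ 1 / δ := by
  intro n
  have hQn1 : (1:ℤ) ≤ Q (n+1) := (Q_base a ξ Q hpos hlt hfl hQ0 hQ1 hQr n).2
  have hQn2 : (1:ℤ) ≤ Q (n+2) := (Q_base a ξ Q hpos hlt hfl hQ0 hQ1 hQr (n+1)).2
  set q : ℕ := (Q (n+1)).toNat with hqdef
  have hqeq : ((q : ℕ) : ℤ) = Q (n+1) := Int.toNat_of_nonneg (by linarith)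
  have hq1 : 1 ≤ q := by omega
  have h0 := hMad q hq1
  have hqR : ((q : ℕ) : ℝ) = (Q (n+1) : ℝ) := by
    exact_mod_cast congrArg (fun z : ℤ => (z:ℝ)) hqeq
  have hnorm : ‖((q : ℕ) : ℚ_[p])‖ ≤ 1 := by
    have h2 : ((q : ℕ) : ℚ_[p]) = ((Q (n+1) : ℤ) : ℚ_[p]) := by
      exact_mod_cast congrArg (fun z : ℤ => (z : ℚ_[p])) hqeq
    rw [h2]
    exact Padic.norm_int_le_one _
  have hdn : distNearestInt ((Q (n+1) : ℝ) * x) ≤ 1 / (Q (n+2) : ℝ) :=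
    le_trans (dn_le_int _ (rec2 a (n+1)))
      (E_bound x a ξ Q hx0 hpos hlt hfl hrec hQ0 hQ1 hQr (n+1))
  rw [hqR] at h0
  have hQ1R : (1:ℝ) ≤ (Q (n+1) : ℝ) := by exact_mod_cast hQn1
  have hQ2R : (1:ℝ) ≤ (Q (n+2) : ℝ) := by exact_mod_cast hQn2
  have hdn0 : 0 ≤ distNearestInt ((Q (n+1) : ℝ) * x) := abs_nonneg _
  have hnn : 0 ≤ ‖((q : ℕ) : ℚ_[p])‖ := norm_nonneg _
  have h3 : δ ≤ (Q (n+1) : ℝ) * (1 / (Q (n+2) : ℝ)) := by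
    have t2 : (Q (n+1) : ℝ) * ‖((q : ℕ) : ℚ_[p])‖ ≤ (Q (n+1) : ℝ) := by nlinarith
    have t1 : (Q (n+1) : ℝ) * ‖((q : ℕ) : ℚ_[p])‖ * distNearestInt ((Q (n+1) : ℝ) * x)
        ≤ (Q (n+1) : ℝ) * (1 / (Q (n+2) : ℝ)) :=
      calc (Q (n+1) : ℝ) * ‖((q : ℕ) : ℚ_[p])‖ * distNearestInt ((Q (n+1) : ℝ) * x)
          ≤ (Q (n+1) : ℝ) * distNearestInt ((Q (n+1) : ℝ) * x) :=
            mul_le_mul_of_nonneg_right t2 hdn0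
        _ ≤ (Q (n+1) : ℝ) * (1 / (Q (n+2) : ℝ)) :=
            mul_le_mul_of_nonneg_left hdn (by linarith)
    linarith
  have h4 : (a n : ℝ) * (Q (n+1) : ℝ) ≤ (Q (n+2) : ℝ) := by
    have hQn0 : (0:ℤ) ≤ Q n := (Q_base a ξ Q hpos hlt hfl hQ0 hQ1 hQr n).1
    have h5 := hQr n
    have h6 : (a n : ℤ) * Q (n+1) ≤ Q (n+2) := by omega
    exact_mod_cast h6
  have h5 : δ * ((a n : ℝ) * (Q (n+1) : ℝ)) ≤ δ * (Q (n+2) : ℝ) :=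
    mul_le_mul_of_nonneg_left h4 hδ.le
  have h6 : δ * (Q (n+2) : ℝ) ≤ (Q (n+1) : ℝ) := by
    have h7 := mul_le_mul_of_nonneg_right h3 (by linarith : (0:ℝ) ≤ (Q (n+2) : ℝ))
    calc δ * (Q (n+2) : ℝ) ≤ (Q (n+1) : ℝ) * (1 / (Q (n+2) : ℝ)) * (Q (n+2) : ℝ) := h7
      _ = (Q (n+1) : ℝ) := by field_simp
  have h7 : δ * (a n : ℝ) * (Q (n+1) : ℝ) ≤ (Q (n+1) : ℝ) := by nlinarith
  have h8 : δ * (a n : ℝ) ≤ 1 := by nlinarith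
  rw [le_div_iff₀ hδ]
  linarith
end KEY

lemma Aword_append (u v : List ℕ) : Aword (u ++ v) = Aword u * Aword v := by
  unfold Aword
  rw [List.map_append, List.prod_append]

lemma matQ_mul (p : ℕ) [Fact p.Prime] (M N : Matrix (Fin 2) (Fin 2) ℤ) :
    matQ p (M * N) = matQ p M * matQ p N := by
  unfold matQ
  have : (Int.cast : ℤ → ℚ_[p]) = ⇑(Int.castRingHom ℚ_[p]) := rfl
  rw [this, Matrix.map_mul]

lemma mulVec_apply2 {R : Type*} [CommRing R] (A : Matrix (Fin 2) (Fin 2) R) (v : Fin 2 → R)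
    (i : Fin 2) : A.mulVec v i = A i 0 * v 0 + A i 1 * v 1 := by
  simp [Matrix.mulVec, dotProduct, Fin.sum_univ_two]

lemma step_vec (p : ℕ) [Fact p.Prime] (c : ℕ) (v : Fin 2 → ℚ_[p]) :
    (matQ p ((Amat c)ᵀ)).mulVec v = ![v 1, v 0 + ((c : ℕ) : ℚ_[p]) * v 1] := by
  have hsym : (Amat c)ᵀ = Amat c := by
    funext i j
    fin_cases i <;> fin_cases j <;> rfl
  rw [hsym]
  funext i
  fin_cases i <;>
    simp [matQ, Amat, Matrix.mulVec, dotProduct, Fin.sum_univ_two,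
      Matrix.map_apply, Matrix.cons_val_zero, Matrix.cons_val_one,
      Matrix.head_cons] <;> ring

lemma mulVec_Aword (p : ℕ) [Fact p.Prime] (a : ℕ → ℕ) (Q : ℕ → ℤ)
    (hQr : ∀ n, Q (n + 2) = (a n : ℤ) * Q (n + 1) + Q n) (m : ℕ) :
    ∀ n : ℕ, (matQ p (Aword ((List.range n).map fun i => a (m + i)))ᵀ).mulVec
        (fun i : Fin 2 => ((Q (m + (i : ℕ)) : ℤ) : ℚ_[p]))
      = fun i : Fin 2 => ((Q (m + n + (i : ℕ)) : ℤ) : ℚ_[p]) := by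
  intro n
  induction n with
  | zero =>
    simp only [List.range_zero, List.map_nil]
    show (matQ p (Aword [])ᵀ).mulVec _ = _
    have h1 : Aword [] = 1 := by simp [Aword]
    rw [h1, Matrix.transpose_one]
    have h2 : matQ p 1 = 1 := by
      unfold matQ
      exact Matrix.map_one _ Int.cast_zero Int.cast_one
    rw [h2, Matrix.one_mulVec]
    funext i
    norm_num
  | succ n ih =>
    rw [List.range_succ, List.map_append, List.map_singleton]
    have h1 : Aword (((List.range n).map fun i => a (m + i)) ++ [a (m + n)])
        = Aword ((List.range n).map fun i => a (m + i)) * Amat (a (m + n)) := by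
      rw [Aword_append]
      simp [Aword]
    have h2 : (Aword ((List.range n).map fun i => a (m + i)) * Amat (a (m + n)))ᵀ
        = (Amat (a (m + n)))ᵀ * (Aword ((List.range n).map fun i => a (m + i)))ᵀ :=
      Matrix.transpose_mul _ _
    rw [h1, h2, matQ_mul, ← Matrix.mulVec_mulVec, ih, step_vec]
    funext i
    fin_cases i
    · show ((Q (m + n + 1) : ℤ) : ℚ_[p]) = ((Q (m + (n+1) + ((0 : Fin 2) : ℕ)) : ℤ) : ℚ_[p])
      rfl
    · show ((Q (m + n + 0) : ℤ) : ℚ_[p]) + ((a (m+n) : ℕ) : ℚ_[p]) * ((Q (m + n + 1) : ℤ) : ℚ_[p])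
          = ((Q (m + (n+1) + ((1 : Fin 2) : ℕ)) : ℤ) : ℚ_[p])
      rw [show m + (n+1) + ((1 : Fin 2) : ℕ) = (m + n) + 2 from rfl, hQr (m + n)]
      push_cast
      ring


/-- limit points of shifted CF-words of a counterexample to PLC, together
with the `p`-adic limits of normalized consecutive convergent denominators, lie in
`LMad_ε` for some `ε > 0`. -/
theorem stmt_1 (p : ℕ) [Fact p.Prime]
    (x : ℝ) (hxirr : Irrational x) (hx0 : 0 < x) (hx1 : x < 1)
    (δ : ℝ) (hδ : 0 < δ)
    (hMad : ∀ q : ℕ, 1 ≤ q →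
      δ ≤ (q : ℝ) * ‖((q : ℕ) : ℚ_[p])‖ * distNearestInt ((q : ℝ) * x))
    (a : ℕ → ℕ) (ha : IsCFSeq x a) (Q : ℕ → ℤ) (hQ : IsCFDen a Q)
    (nk : ℕ → ℕ) (hnk : StrictMono nk)
    (w : ℕ → ℕ) (hw : ∀ i : ℕ, ∃ K : ℕ, ∀ k ≥ K, a (nk k + i) = w i)
    (y : Fin 2 → ℚ_[p]) (hy : max ‖y 0‖ ‖y 1‖ = 1)
    (e : ℕ → ℤ) (c : ℕ → Fin 2 → ℚ_[p])
    (hc : ∀ k : ℕ, c k = fun i : Fin 2 =>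
      (p : ℚ_[p]) ^ (e k) * ((Q (nk k + (i : ℕ)) : ℚ_[p])))
    (hcn : ∀ k : ℕ, max ‖c k 0‖ ‖c k 1‖ = 1)
    (hconv : Tendsto c atTop (nhds y)) :
    ∃ ε > 0, LMadE p ε w y := by
  obtain ⟨ξ, hx0, hprop⟩ := ha
  have hpos : ∀ n, 0 < ξ n := fun n => (hprop n).1.1
  have hlt : ∀ n, ξ n < 1 := fun n => (hprop n).1.2
  have hfl : ∀ n, (a n : ℤ) = ⌊(ξ n)⁻¹⌋ := fun n => (hprop n).2.1
  have hrec' : ∀ n, ξ (n + 1) = (ξ n)⁻¹ - (a n : ℝ) := fun n => (hprop n).2.2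
  obtain ⟨hQ0, hQ1, hQr⟩ := hQ
  refine ⟨δ / 4, by linarith, ?_, ?_⟩
  · -- letters bounded
    intro n
    obtain ⟨K, hK⟩ := hw n
    have hwn : w n = a (nk K + n) := (hK K le_rfl).symm
    constructor
    · rw [hwn]; exact a_one_le a ξ hpos hlt hfl _
    · have hb := a_le_inv_delta p x δ hδ hMad a ξ Q hx0 hpos hlt hfl hrec' hQ0 hQ1 hQr (nk K + n)
      have h1 : ((w n : ℤ) : ℝ) ≤ (δ / 4)⁻¹ := by
        rw [hwn]
        push_cast
        have h2 : (δ / 4)⁻¹ = 4 / δ := by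
          field_simp
        rw [h2]
        have h3 : 1 / δ ≤ 4 / δ := by
          rw [div_le_div_iff₀ hδ hδ]
          nlinarith
        linarith
      have h2 : (w n : ℤ) ≤ ⌊(δ / 4)⁻¹⌋ := Int.le_floor.mpr h1
      linarith
  · -- PBad condition
    intro n
    set Mt := matQ p (Aword (wordPrefix w n))ᵀ with hMt
    -- prefix identification, eventually
    have hpref : ∃ K0 : ℕ, ∀ k ≥ K0, wordPrefix w n = (List.range n).map fun i => a (nk k + i) := by
      choose Kf hKf using hw
      refine ⟨(Finset.range n).sup Kf, fun k hk => ?_⟩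
      unfold wordPrefix
      refine (List.map_congr_left fun i hi => ?_)
      rw [List.mem_range] at hi
      exact (hKf i k (le_trans (Finset.le_sup (Finset.mem_range.mpr hi)) hk)).symm
    obtain ⟨K0, hK0⟩ := hpref
    -- expression of the vectors
    have hVk : ∀ k ≥ K0, Mt.mulVec (c k)
        = fun i : Fin 2 => (p : ℚ_[p]) ^ (e k) * ((Q (nk k + n + (i : ℕ)) : ℤ) : ℚ_[p]) := by
      intro k hk
      rw [hMt, hK0 k hk, hc k]
      have hsm : (fun i : Fin 2 => (p : ℚ_[p]) ^ (e k) * ((Q (nk k + (i : ℕ)) : ℤ) : ℚ_[p]))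
          = (p : ℚ_[p]) ^ (e k) • (fun i : Fin 2 => ((Q (nk k + (i : ℕ)) : ℤ) : ℚ_[p])) := by
        funext i
        simp [smul_eq_mul]
      rw [hsm, Matrix.mulVec_smul, mulVec_Aword p a Q hQr (nk k) n]
      funext i
      simp [smul_eq_mul]
    -- norm of p^e at least 1
    have hpe : ∀ k, (1 : ℝ) ≤ ‖(p : ℚ_[p]) ^ (e k)‖ := by
      intro k
      have hb : ∀ i : Fin 2, ‖c k i‖ ≤ ‖(p : ℚ_[p]) ^ (e k)‖ := by
        intro i
        rw [hc k]
        simp only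
        rw [norm_mul]
        exact mul_le_of_le_one_right (norm_nonneg _) (Padic.norm_int_le_one _)
      calc (1 : ℝ) = max ‖c k 0‖ ‖c k 1‖ := (hcn k).symm
        _ ≤ ‖(p : ℚ_[p]) ^ (e k)‖ := max_le (hb 0) (hb 1)
    -- nonvanishing of integer combinations, eventually
    have hS0 : ∀ A B : ℤ, ¬(A = 0 ∧ B = 0) → ∀ k, K0 ≤ k → A.natAbs + 1 ≤ k →
        A * Q (nk k + n) + B * Q (nk k + n + 1) ≠ 0 := by
      intro A B hAB k _ hka h
      set m := nk k + n with hm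
      have hge : ((m : ℕ) : ℤ) ≤ Q (m + 1) := Q_ge a ξ Q hpos hlt hfl hQ0 hQ1 hQr m
      have hnk : k ≤ nk k := hnk.le_apply
      have hQmbig : (A.natAbs : ℤ) < Q (m + 1) := by
        have : (k : ℤ) ≤ (m : ℤ) := by
          rw [hm]; push_cast; omega
        omega
      have hQm1pos : (1 : ℤ) ≤ Q (m + 1) := (Q_base a ξ Q hpos hlt hfl hQ0 hQ1 hQr m).2
      have hcp := Q_cop a Q hQ0 hQ1 hQr m
      have h1 : Q (m + 1) ∣ A * Q m := ⟨-B, by linarith⟩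
      have hdvd : Q (m + 1) ∣ A := hcp.symm.dvd_of_dvd_mul_right h1
      have hA0 : A = 0 := by
        refine Int.eq_zero_of_dvd_of_natAbs_lt_natAbs hdvd ?_
        omega
      rw [hA0] at h
      have hB0 : B = 0 := by
        simp only [zero_mul, zero_add] at h
        rcases mul_eq_zero.mp h with h' | h'
        · exact h'
        · omega
      exact hAB ⟨hA0, hB0⟩
    -- tendsto facts
    have hci : ∀ i : Fin 2, Tendsto (fun k => c k i) atTop (nhds (y i)) :=
      fun i => tendsto_pi_nhds.mp hconv i
    have hVi : ∀ i : Fin 2, Tendsto (fun k => Mt.mulVec (c k) i) atTop (nhds (Mt.mulVec y i)) := by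
      intro i
      have hform : ∀ v : Fin 2 → ℚ_[p], Mt.mulVec v i = Mt i 0 * v 0 + Mt i 1 * v 1 :=
        fun v => mulVec_apply2 Mt v i
      simp only [hform]
      exact ((hci 0).const_mul _).add ((hci 1).const_mul _)
    -- positivity of the limit vector
    have hpos0 : δ / 4 ≤ ‖Mt.mulVec y 0‖ := by
      refine ge_of_tendsto ((hVi 0).norm) ?_
      rw [eventually_atTop]
      refine ⟨max K0 2, fun k hk => ?_⟩
      have hk0 : K0 ≤ k := le_trans (le_max_left _ _) hk
      have hk2 : 2 ≤ k := le_trans (le_max_right _ _) hk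
      set m := nk k + n with hm
      have hSne := hS0 1 0 (by simp) k hk0 (by omega : (1:ℤ).natAbs + 1 ≤ k)
      have hkey := key_norm p x δ hδ hMad a ξ Q hx0 hpos hlt hfl hrec' hQ0 hQ1 hQr
        m 1 0 (by simp) hSne
      have hsimp : ((1 : ℤ) * Q m + 0 * Q (m + 1)) = Q m := by ring
      rw [hsimp] at hkey
      have hmax1 : max (((1:ℤ) : ℝ) ^ 2) (((0:ℤ) : ℝ) ^ 2) = 1 := by norm_num
      rw [hmax1, div_one] at hkey
      have hVke := hVk k hk0
      rw [hVke]
      simp only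
      rw [← hm, norm_mul]
      have hpe' := hpe k
      have hnn : (0:ℝ) ≤ ‖((Q (m + (0:ℕ)) : ℤ) : ℚ_[p])‖ := norm_nonneg _
      have heq : (m + ((0 : Fin 2) : ℕ)) = m := by norm_num
      calc δ / 4 ≤ ‖((Q m : ℤ) : ℚ_[p])‖ := hkey
        _ = 1 * ‖((Q (m + ((0 : Fin 2) : ℕ)) : ℤ) : ℚ_[p])‖ := by rw [heq, one_mul]
        _ ≤ ‖(p : ℚ_[p]) ^ (e k)‖ * ‖((Q (m + ((0 : Fin 2) : ℕ)) : ℤ) : ℚ_[p])‖ := by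
            apply mul_le_mul_of_nonneg_right hpe' (norm_nonneg _)
    have hgpos : 0 < max ‖Mt.mulVec y 0‖ ‖Mt.mulVec y 1‖ :=
      lt_of_lt_of_le (lt_of_lt_of_le (by linarith : (0:ℝ) < δ / 4) hpos0) (le_max_left _ _)
    -- the PBad inequality
    intro A B hAB
    have hmaxsq0 : (0:ℝ) < max ((A : ℝ) ^ 2) ((B : ℝ) ^ 2) := by
      rcases not_and_or.mp hAB with h | h
      · have : (A : ℝ) ≠ 0 := by exact_mod_cast h
        exact lt_of_lt_of_le (by positivity) (le_max_left _ _)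
      · have : (B : ℝ) ≠ 0 := by exact_mod_cast h
        exact lt_of_lt_of_le (by positivity) (le_max_right _ _)
    set ec : ℝ := δ / 4 / max ((A : ℝ) ^ 2) ((B : ℝ) ^ 2) with hec
    have hec0 : 0 ≤ ec := by positivity
    -- eventual comparison
    have hev : ∀ᶠ k in atTop,
        ec * max ‖Mt.mulVec (c k) 0‖ ‖Mt.mulVec (c k) 1‖
          ≤ ‖(A : ℚ_[p]) * Mt.mulVec (c k) 0 + (B : ℚ_[p]) * Mt.mulVec (c k) 1‖ := by
      rw [eventually_atTop]
      refine ⟨max K0 (A.natAbs + 1), fun k hk => ?_⟩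
      have hk0 : K0 ≤ k := le_trans (le_max_left _ _) hk
      have hka : A.natAbs + 1 ≤ k := le_trans (le_max_right _ _) hk
      set m := nk k + n with hm
      have hSne := hS0 A B hAB k hk0 hka
      have hkey := key_norm p x δ hδ hMad a ξ Q hx0 hpos hlt hfl hrec' hQ0 hQ1 hQr
        m A B hAB hSne
      have hVke := hVk k hk0
      rw [hVke]
      simp only
      rw [← hm]
      have hnum : (A : ℚ_[p]) * ((p : ℚ_[p]) ^ (e k) * ((Q (m + ((0 : Fin 2) : ℕ)) : ℤ) : ℚ_[p]))
          + (B : ℚ_[p]) * ((p : ℚ_[p]) ^ (e k) * ((Q (m + ((1 : Fin 2) : ℕ)) : ℤ) : ℚ_[p]))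
          = (p : ℚ_[p]) ^ (e k) * ((A * Q m + B * Q (m + 1) : ℤ) : ℚ_[p]) := by
        have h00 : (m + ((0 : Fin 2) : ℕ)) = m := by norm_num
        have h11 : (m + ((1 : Fin 2) : ℕ)) = m + 1 := by norm_num
        rw [h00, h11]
        push_cast
        ring
      rw [hnum]
      have hcomp : ∀ i : Fin 2, ‖(p : ℚ_[p]) ^ (e k) * ((Q (m + (i : ℕ)) : ℤ) : ℚ_[p])‖
          ≤ ‖(p : ℚ_[p]) ^ (e k)‖ := by
        intro i
        rw [norm_mul]
        exact mul_le_of_le_one_right (norm_nonneg _) (Padic.norm_int_le_one _)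
      have hmaxle : max ‖(p : ℚ_[p]) ^ (e k) * ((Q (m + ((0 : Fin 2) : ℕ)) : ℤ) : ℚ_[p])‖
          ‖(p : ℚ_[p]) ^ (e k) * ((Q (m + ((1 : Fin 2) : ℕ)) : ℤ) : ℚ_[p])‖
          ≤ ‖(p : ℚ_[p]) ^ (e k)‖ := max_le (hcomp 0) (hcomp 1)
      calc ec * max ‖(p : ℚ_[p]) ^ (e k) * ((Q (m + ((0 : Fin 2) : ℕ)) : ℤ) : ℚ_[p])‖
            ‖(p : ℚ_[p]) ^ (e k) * ((Q (m + ((1 : Fin 2) : ℕ)) : ℤ) : ℚ_[p])‖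
          ≤ ec * ‖(p : ℚ_[p]) ^ (e k)‖ := mul_le_mul_of_nonneg_left hmaxle hec0
        _ = ‖(p : ℚ_[p]) ^ (e k)‖ * ec := mul_comm _ _
        _ ≤ ‖(p : ℚ_[p]) ^ (e k)‖ * ‖((A * Q m + B * Q (m + 1) : ℤ) : ℚ_[p])‖ :=
            mul_le_mul_of_nonneg_left hkey (norm_nonneg _)
        _ = ‖(p : ℚ_[p]) ^ (e k) * ((A * Q m + B * Q (m + 1) : ℤ) : ℚ_[p])‖ :=
            (norm_mul _ _).symm
    -- take limits
    have hnumt : Tendsto (fun k => ‖(A : ℚ_[p]) * Mt.mulVec (c k) 0 + (B : ℚ_[p]) * Mt.mulVec (c k) 1‖)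
        atTop (nhds ‖(A : ℚ_[p]) * Mt.mulVec y 0 + (B : ℚ_[p]) * Mt.mulVec y 1‖) :=
      (((hVi 0).const_mul _).add ((hVi 1).const_mul _)).norm
    have hgt : Tendsto (fun k => ec * max ‖Mt.mulVec (c k) 0‖ ‖Mt.mulVec (c k) 1‖)
        atTop (nhds (ec * max ‖Mt.mulVec y 0‖ ‖Mt.mulVec y 1‖)) :=
      (((hVi 0).norm).max ((hVi 1).norm)).const_mul ec
    have hlim : ec * max ‖Mt.mulVec y 0‖ ‖Mt.mulVec y 1‖
        ≤ ‖(A : ℚ_[p]) * Mt.mulVec y 0 + (B : ℚ_[p]) * Mt.mulVec y 1‖ :=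
      le_of_tendsto_of_tendsto hgt hnumt hev
    rw [le_div_iff₀ hgpos]
    exact hlim
end

section
/- Let p be a prime, k ≥ 1, and let A, B be 2×2 matrices over ℤ_p, each with determinant 1 or −1, such that every entry of A − B has p-adic absolute value at most p^{−k}. Then for all nonzero vectors u, v ∈ ℚ_p²: d(A·u, v) ≤ max(d(B·u, v), p^{−k}). -/
open Matrix Filter

lemma qnorm_sub_le {p : ℕ} [Fact p.Prime] (x y : ℚ_[p]) : ‖x - y‖ ≤ max ‖x‖ ‖y‖ := by
  rw [sub_eq_add_neg]
  simpa using Padic.nonarchimedean x (-y)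

lemma coe_norm_le_one {p : ℕ} [Fact p.Prime] (z : ℤ_[p]) : ‖(z : ℚ_[p])‖ ≤ 1 := by
  rw [← z.norm_def]; exact z.norm_le_one

lemma max_norm_mulVec {p : ℕ} [Fact p.Prime]
    (A : Matrix (Fin 2) (Fin 2) ℤ_[p]) (hA : A.det = 1 ∨ A.det = -1)
    (u : Fin 2 → ℚ_[p]) :
    max ‖(A.map fun z : ℤ_[p] => (z : ℚ_[p])).mulVec u 0‖
        ‖(A.map fun z : ℤ_[p] => (z : ℚ_[p])).mulVec u 1‖ = max ‖u 0‖ ‖u 1‖ := by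
  set a : ℚ_[p] := (A 0 0 : ℚ_[p]) with ha
  set b : ℚ_[p] := (A 0 1 : ℚ_[p]) with hb
  set c : ℚ_[p] := (A 1 0 : ℚ_[p]) with hc
  set d : ℚ_[p] := (A 1 1 : ℚ_[p]) with hd
  have hX : (A.map fun z : ℤ_[p] => (z : ℚ_[p])).mulVec u 0 = a * u 0 + b * u 1 := by
    simp [Matrix.mulVec, dotProduct, Fin.sum_univ_two, Matrix.map_apply, ha, hb]
  have hY : (A.map fun z : ℤ_[p] => (z : ℚ_[p])).mulVec u 1 = c * u 0 + d * u 1 := by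
    simp [Matrix.mulVec, dotProduct, Fin.sum_univ_two, Matrix.map_apply, hc, hd]
  have hdet : ‖a * d - b * c‖ = 1 := by
    have : a * d - b * c = ((A.det : ℤ_[p]) : ℚ_[p]) := by
      rw [Matrix.det_fin_two]; push_cast [ha, hb, hc, hd]; ring
    rcases hA with h | h <;> simp [this, h]
  rw [hX, hY]
  -- abbreviations
  set X : ℚ_[p] := a * u 0 + b * u 1
  set Y : ℚ_[p] := c * u 0 + d * u 1
  have bound : ∀ (s t x y : ℚ_[p]), ‖s‖ ≤ 1 → ‖t‖ ≤ 1 →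
      ‖s * x + t * y‖ ≤ max ‖x‖ ‖y‖ := by
    intro s t x y hs ht
    refine le_trans (Padic.nonarchimedean _ _) (max_le_max ?_ ?_) <;>
      · rw [norm_mul]
        exact mul_le_of_le_one_left (norm_nonneg _) (by assumption)
  have bound' : ∀ (s t x y : ℚ_[p]), ‖s‖ ≤ 1 → ‖t‖ ≤ 1 →
      ‖s * x - t * y‖ ≤ max ‖x‖ ‖y‖ := by
    intro s t x y hs ht
    have := bound s (-t) x y hs (by simpa using ht)
    simpa [sub_eq_add_neg, neg_mul] using this
  apply le_antisymm
  · exact max_le (bound a b _ _ (coe_norm_le_one _) (coe_norm_le_one _))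
      (bound c d _ _ (coe_norm_le_one _) (coe_norm_le_one _))
  · have h0 : ‖u 0‖ ≤ max ‖X‖ ‖Y‖ := by
      have e : d * X - b * Y = (a * d - b * c) * u 0 := by simp only [X, Y]; ring
      calc ‖u 0‖ = ‖(a * d - b * c) * u 0‖ := by rw [norm_mul, hdet, one_mul]
        _ = ‖d * X - b * Y‖ := by rw [e]
        _ ≤ max ‖X‖ ‖Y‖ := bound' d b X Y (coe_norm_le_one _) (coe_norm_le_one _)
    have h1 : ‖u 1‖ ≤ max ‖X‖ ‖Y‖ := by
      have e : a * Y - c * X = (a * d - b * c) * u 1 := by simp only [X, Y]; ring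
      calc ‖u 1‖ = ‖(a * d - b * c) * u 1‖ := by rw [norm_mul, hdet, one_mul]
        _ = ‖a * Y - c * X‖ := by rw [e]
        _ ≤ max ‖Y‖ ‖X‖ := bound' a c Y X (coe_norm_le_one _) (coe_norm_le_one _)
        _ = max ‖X‖ ‖Y‖ := max_comm _ _
    exact max_le h0 h1

/-- if `A ≡ B (mod p^k)` in `SL₂^±(ℤ_p)` then
`d(Au, v) ≤ max (d(Bu, v)) (p^{-k})`. -/
theorem stmt_9 (p : ℕ) [Fact p.Prime] (k : ℕ) (hk : 1 ≤ k)
    (A B : Matrix (Fin 2) (Fin 2) ℤ_[p])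
    (hA : A.det = 1 ∨ A.det = -1) (hB : B.det = 1 ∨ B.det = -1)
    (hAB : ∀ i j : Fin 2, ‖A i j - B i j‖ ≤ (p : ℝ) ^ (-(k : ℤ)))
    (u v : Fin 2 → ℚ_[p]) (hu : u ≠ 0) (hv : v ≠ 0) :
    pdist p (Matrix.mulVec (A.map fun z : ℤ_[p] => (z : ℚ_[p])) u) v ≤
      max (pdist p (Matrix.mulVec (B.map fun z : ℤ_[p] => (z : ℚ_[p])) u) v)
        ((p : ℝ) ^ (-(k : ℤ))) := by
  have hppos : (0:ℝ) < p := by exact_mod_cast (Fact.out : p.Prime).pos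
  set ε : ℝ := (p : ℝ) ^ (-(k : ℤ)) with hε
  have hεpos : 0 < ε := zpow_pos hppos _
  set Au := (A.map fun z : ℤ_[p] => (z : ℚ_[p])).mulVec u with hAu
  set Bu := (B.map fun z : ℤ_[p] => (z : ℚ_[p])).mulVec u with hBu
  set MU : ℝ := max ‖u 0‖ ‖u 1‖ with hMUdef
  set MV : ℝ := max ‖v 0‖ ‖v 1‖ with hMVdef
  have hMuA : max ‖Au 0‖ ‖Au 1‖ = MU := max_norm_mulVec A hA u
  have hMuB : max ‖Bu 0‖ ‖Bu 1‖ = MU := max_norm_mulVec B hB u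
  have hMU : 0 < MU := by
    have h : u 0 ≠ 0 ∨ u 1 ≠ 0 := by
      by_contra h; push_neg at h
      exact hu (funext fun i => by fin_cases i <;> simp [h.1, h.2])
    rcases h with h | h
    · exact lt_max_iff.mpr (Or.inl (norm_pos_iff.mpr h))
    · exact lt_max_iff.mpr (Or.inr (norm_pos_iff.mpr h))
  have hMV : 0 < MV := by
    have h : v 0 ≠ 0 ∨ v 1 ≠ 0 := by
      by_contra h; push_neg at h
      exact hv (funext fun i => by fin_cases i <;> simp [h.1, h.2])
    rcases h with h | h
    · exact lt_max_iff.mpr (Or.inl (norm_pos_iff.mpr h))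
    · exact lt_max_iff.mpr (Or.inr (norm_pos_iff.mpr h))
  have hdiff_entry : ∀ i j, ‖((A i j : ℚ_[p])) - (B i j : ℚ_[p])‖ ≤ ε := by
    intro i j
    have h := hAB i j
    rw [PadicInt.norm_def] at h
    rw [← PadicInt.coe_sub]
    exact h
  have hcomp : ∀ i, ‖Au i - Bu i‖ ≤ ε * MU := by
    intro i
    have e : Au i - Bu i
        = ((A i 0 : ℚ_[p]) - B i 0) * u 0 + ((A i 1 : ℚ_[p]) - B i 1) * u 1 := by
      simp only [hAu, hBu, Matrix.mulVec, dotProduct, Fin.sum_univ_two,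
        Matrix.map_apply]
      ring
    rw [e]
    refine le_trans (Padic.nonarchimedean _ _) (max_le ?_ ?_)
    · rw [norm_mul]
      exact mul_le_mul (hdiff_entry i 0) (le_max_left _ _) (norm_nonneg _) hεpos.le
    · rw [norm_mul]
      exact mul_le_mul (hdiff_entry i 1) (le_max_right _ _) (norm_nonneg _) hεpos.le
  set NA : ℚ_[p] := Au 0 * v 1 - Au 1 * v 0 with hNAdef
  set NB : ℚ_[p] := Bu 0 * v 1 - Bu 1 * v 0 with hNBdef
  have hND : ‖NA - NB‖ ≤ ε * MU * MV := by
    have e : NA - NB = (Au 0 - Bu 0) * v 1 - (Au 1 - Bu 1) * v 0 := by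
      simp only [hNAdef, hNBdef]; ring
    rw [e]
    refine le_trans (qnorm_sub_le _ _) (max_le ?_ ?_)
    · rw [norm_mul]
      exact mul_le_mul (hcomp 0) (le_max_right _ _) (norm_nonneg _)
        (by positivity)
    · rw [norm_mul]
      exact mul_le_mul (hcomp 1) (le_max_left _ _) (norm_nonneg _)
        (by positivity)
  have hNA : ‖NA‖ ≤ max ‖NB‖ (ε * MU * MV) := by
    have e : NA = NB + (NA - NB) := by ring
    calc ‖NA‖ = ‖NB + (NA - NB)‖ := by rw [← e]
      _ ≤ max ‖NB‖ ‖NA - NB‖ := Padic.nonarchimedean _ _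
      _ ≤ max ‖NB‖ (ε * MU * MV) := max_le_max le_rfl hND
  have hpos : 0 < MU * MV := mul_pos hMU hMV
  show ‖NA‖ / (max ‖Au 0‖ ‖Au 1‖ * MV) ≤ max (‖NB‖ / (max ‖Bu 0‖ ‖Bu 1‖ * MV)) ε
  rw [hMuA, hMuB, div_le_iff₀ hpos]
  refine le_trans hNA ?_
  have : max (‖NB‖ / (MU * MV)) ε * (MU * MV)
      = max (‖NB‖ / (MU * MV) * (MU * MV)) (ε * (MU * MV)) :=
    max_mul_of_nonneg _ _ hpos.le
  rw [this, div_mul_cancel₀ _ hpos.ne', ← mul_assoc]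
end

section
/- Let p be a prime, k ∈ ℕ, δ > 0, and let q = (q₁,q₂) and y = (y₁,y₂) be nonzero vectors in ℚ_p² with d(q, y) ≤ p^{−k}. Then for every pair of integers (u₁,u₂): if |u₁·q₁ + u₂·q₂|_p / max(|q₁|_p,|q₂|_p) ≤ δ, then |u₁·y₁ + u₂·y₂|_p / max(|y₁|_p,|y₂|_p) ≤ max(δ, p^{−k}). -/
open Matrix Filter

lemma stmt_10_aux {p : ℕ} [Fact p.Prime] (δ P Mq My : ℝ) (hMq : 0 < Mq) (hMy : 0 < My)
    (hδ : 0 ≤ δ) (Ly Lq D qi yi c : ℚ_[p]) (hqi : ‖qi‖ = Mq) (hyi : ‖yi‖ ≤ My)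
    (hc : ‖c‖ ≤ 1) (hid : Ly * qi = Lq * yi + c * D)
    (hLqb : ‖Lq‖ ≤ δ * Mq) (hDb : ‖D‖ ≤ P * (Mq * My)) :
    ‖Ly‖ / My ≤ max δ P := by
  have hP : 0 ≤ P := by nlinarith [norm_nonneg D, mul_pos hMq hMy]
  rw [div_le_iff₀ hMy]
  have h1 : ‖Ly‖ * Mq = ‖Ly * qi‖ := by rw [norm_mul, hqi]
  have h2 : ‖Lq * yi + c * D‖ ≤ max ‖Lq * yi‖ ‖c * D‖ := Padic.nonarchimedean _ _
  have h3 : ‖Lq * yi‖ ≤ max δ P * (Mq * My) := by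
    rw [norm_mul]
    have : ‖Lq‖ * ‖yi‖ ≤ (δ * Mq) * My := by
      apply mul_le_mul hLqb hyi (norm_nonneg _) (by positivity)
    calc ‖Lq‖ * ‖yi‖ ≤ δ * Mq * My := this
      _ ≤ max δ P * (Mq * My) := by
          have h := le_max_left δ P
          nlinarith [mul_nonneg (sub_nonneg.2 h) (mul_pos hMq hMy).le]
  have h4 : ‖c * D‖ ≤ max δ P * (Mq * My) := by
    rw [norm_mul]
    have h5 : ‖c‖ * ‖D‖ ≤ ‖D‖ := by
      nlinarith [norm_nonneg D]
    have h := le_max_right δ P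
    nlinarith [norm_nonneg D, mul_nonneg (sub_nonneg.2 h) (mul_pos hMq hMy).le]
  have key : ‖Ly‖ * Mq ≤ max δ P * (Mq * My) := by
    rw [h1, hid]
    exact h2.trans (max_le h3 h4)
  nlinarith [norm_nonneg Ly]

lemma vec2_norm_pos {p : ℕ} [Fact p.Prime] (v : Fin 2 → ℚ_[p]) (hv : v ≠ 0) :
    0 < max ‖v 0‖ ‖v 1‖ := by
  rcases Function.ne_iff.1 hv with ⟨i, hi⟩
  fin_cases i
  · exact lt_max_of_lt_left (norm_pos_iff.2 hi)
  · exact lt_max_of_lt_right (norm_pos_iff.2 hi)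

/-- small values of linear forms transfer along `p^{-k}`-close projective
points. -/
theorem stmt_10 (p : ℕ) [Fact p.Prime] (k : ℕ) (δ : ℝ) (hδ : 0 < δ)
    (q y : Fin 2 → ℚ_[p]) (hq : q ≠ 0) (hy : y ≠ 0)
    (hd : pdist p q y ≤ (p : ℝ) ^ (-(k : ℤ)))
    (u₁ u₂ : ℤ)
    (hsmall : ‖(u₁ : ℚ_[p]) * q 0 + (u₂ : ℚ_[p]) * q 1‖ / max ‖q 0‖ ‖q 1‖ ≤ δ) :
    ‖(u₁ : ℚ_[p]) * y 0 + (u₂ : ℚ_[p]) * y 1‖ / max ‖y 0‖ ‖y 1‖ ≤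
      max δ ((p : ℝ) ^ (-(k : ℤ))) := by
  set P := (p : ℝ) ^ (-(k : ℤ)) with hPdef
  set Mq := max ‖q 0‖ ‖q 1‖ with hMqdef
  set My := max ‖y 0‖ ‖y 1‖ with hMydef
  have hMq : 0 < Mq := vec2_norm_pos q hq
  have hMy : 0 < My := vec2_norm_pos y hy
  set Lq := (u₁ : ℚ_[p]) * q 0 + (u₂ : ℚ_[p]) * q 1 with hLqdef
  set Ly := (u₁ : ℚ_[p]) * y 0 + (u₂ : ℚ_[p]) * y 1 with hLydef
  set D := q 0 * y 1 - q 1 * y 0 with hDdef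
  have hLqb : ‖Lq‖ ≤ δ * Mq := by
    rw [div_le_iff₀ hMq] at hsmall; exact hsmall
  have hDb : ‖D‖ ≤ P * (Mq * My) := by
    have : ‖D‖ / (Mq * My) ≤ P := hd
    rw [div_le_iff₀ (by positivity)] at this
    linarith
  rcases le_total ‖q 1‖ ‖q 0‖ with h01 | h01
  · refine stmt_10_aux δ P Mq My hMq hMy hδ.le Ly Lq D (q 0) (y 0) (u₂ : ℚ_[p])
      ?_ (le_max_left _ _) (Padic.norm_int_le_one _) ?_ hLqb hDb
    · exact (max_eq_left h01).symm
    · ring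
  · refine stmt_10_aux δ P Mq My hMq hMy hδ.le Ly Lq D (q 1) (y 1) (-(u₁ : ℚ_[p]))
      ?_ (le_max_right _ _) ?_ ?_ hLqb hDb
    · exact (max_eq_right h01).symm
    · rw [norm_neg]; exact Padic.norm_int_le_one _
    · ring
end

section
/- Let w be a nonempty finite word over the positive integers, and regard A_w as a complex matrix. Then A_w has two distinct complex eigenvalues, and no eigenvalue of A_w is a root of unity (for every eigenvalue λ ∈ ℂ and every n ≥ 1, λ^n ≠ 1). -/
open Matrix Filter

lemma Aword_cons (a : ℕ) (v : List ℕ) : Aword (a :: v) = Amat a * Aword v := by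
  simp [Aword]

lemma Aword_inv (u : List ℕ) (hu : u ≠ []) (hpos : ∀ b ∈ u, 1 ≤ b) :
    0 ≤ Aword u 0 0 ∧ Aword u 0 0 ≤ Aword u 0 1 ∧ Aword u 0 0 ≤ Aword u 1 0 ∧
    Aword u 0 1 ≤ Aword u 1 1 ∧ Aword u 1 0 ≤ Aword u 1 1 ∧
    1 ≤ Aword u 0 1 ∧ 1 ≤ Aword u 1 0 := by
  induction u with
  | nil => exact absurd rfl hu
  | cons a v ih =>
    have ha : 1 ≤ (a : ℤ) := by exact_mod_cast hpos a (List.mem_cons_self)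
    rcases eq_or_ne v [] with rfl | hv
    · simp only [Aword, List.map_cons, List.map_nil, List.prod_cons, List.prod_nil, mul_one, Amat]
      simp [Matrix.cons_val_zero, Matrix.cons_val_one]
      omega
    · obtain ⟨h1, h2, h3, h4, h5, h6, h7⟩ :=
        ih hv (fun b hb => hpos b (List.mem_cons_of_mem a hb))
      have e00 : Aword (a :: v) 0 0 = Aword v 1 0 := by
        simp [Aword_cons, Amat, Matrix.mul_apply, Fin.sum_univ_two]
      have e01 : Aword (a :: v) 0 1 = Aword v 1 1 := by
        simp [Aword_cons, Amat, Matrix.mul_apply, Fin.sum_univ_two]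
      have e10 : Aword (a :: v) 1 0 = Aword v 0 0 + a * Aword v 1 0 := by
        simp [Aword_cons, Amat, Matrix.mul_apply, Fin.sum_univ_two]
      have e11 : Aword (a :: v) 1 1 = Aword v 0 1 + a * Aword v 1 1 := by
        simp [Aword_cons, Amat, Matrix.mul_apply, Fin.sum_univ_two]
      rw [e00, e01, e10, e11]
      refine ⟨by linarith, h5, ?_, ?_, ?_, by linarith, ?_⟩
      · nlinarith
      · nlinarith
      · nlinarith
      · nlinarith

lemma Aword_trace (u : List ℕ) (h2 : 2 ≤ u.length) (hpos : ∀ b ∈ u, 1 ≤ b) :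
    3 ≤ Aword u 0 0 + Aword u 1 1 := by
  match u, h2 with
  | a :: v, h2 =>
    have hv : v ≠ [] := by
      intro h; subst h; simp at h2
    have ha : 1 ≤ (a : ℤ) := by exact_mod_cast hpos a (List.mem_cons_self)
    obtain ⟨h1, hab, hac, hbd, hcd, hb, hc⟩ :=
      Aword_inv v hv (fun b hb => hpos b (List.mem_cons_of_mem a hb))
    have e00 : Aword (a :: v) 0 0 = Aword v 1 0 := by
      simp [Aword_cons, Amat, Matrix.mul_apply, Fin.sum_univ_two]
    have e11 : Aword (a :: v) 1 1 = Aword v 0 1 + a * Aword v 1 1 := by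
      simp [Aword_cons, Amat, Matrix.mul_apply, Fin.sum_univ_two]
    rw [e00, e11]
    nlinarith

lemma Aword_det (u : List ℕ) : (Aword u).det = (-1) ^ u.length := by
  induction u with
  | nil => simp [Aword]
  | cons a v ih =>
    rw [Aword_cons, Matrix.det_mul, ih]
    have : (Amat a).det = -1 := by simp [Amat]
    rw [this]
    simp [pow_succ]

lemma key_mat (A B C D : ℤ) (hB1 : 1 ≤ B)
    (hδ : A * D - B * C = 1 ∨ A * D - B * C = -1)
    (hT1 : 1 ≤ A + D) (hT3 : A * D - B * C = 1 → 3 ≤ A + D) :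
    (∃ l₁ l₂ : ℂ, l₁ ≠ l₂ ∧
      (∃ z : Fin 2 → ℂ, z ≠ 0 ∧
        Matrix.mulVec ((!![A, B; C, D]).map (Int.cast : ℤ → ℂ)) z = l₁ • z) ∧
      (∃ z : Fin 2 → ℂ, z ≠ 0 ∧
        Matrix.mulVec ((!![A, B; C, D]).map (Int.cast : ℤ → ℂ)) z = l₂ • z)) ∧
    ∀ l : ℂ,
      (∃ z : Fin 2 → ℂ, z ≠ 0 ∧
        Matrix.mulVec ((!![A, B; C, D]).map (Int.cast : ℤ → ℂ)) z = l • z) →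
      ∀ n : ℕ, 1 ≤ n → l ^ n ≠ 1 := by
  -- discriminant is at least 5
  have h5 : (5 : ℝ) ≤ ((A : ℝ) + D) ^ 2 - 4 * ((A : ℝ) * D - (B : ℝ) * C) := by
    rcases hδ with h | h
    · have h3' : (3 : ℝ) ≤ (A : ℝ) + D := by exact_mod_cast hT3 h
      have h' : (A : ℝ) * D - (B : ℝ) * C = 1 := by exact_mod_cast h
      nlinarith
    · have h' : (A : ℝ) * D - (B : ℝ) * C = -1 := by exact_mod_cast h
      have h1' : (1 : ℝ) ≤ (A : ℝ) + D := by exact_mod_cast hT1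
      nlinarith
  set s : ℝ := Real.sqrt (((A : ℝ) + D) ^ 2 - 4 * ((A : ℝ) * D - (B : ℝ) * C)) with hsdef
  have hs2 : s ^ 2 = ((A : ℝ) + D) ^ 2 - 4 * ((A : ℝ) * D - (B : ℝ) * C) :=
    Real.sq_sqrt (by linarith)
  have hspos : 0 < s := Real.sqrt_pos.mpr (by linarith)
  have hc1 : ((((A : ℝ) + D) + s) / 2) ^ 2 - ((A : ℝ) + D) * ((((A : ℝ) + D) + s) / 2)
      + ((A : ℝ) * D - (B : ℝ) * C) = 0 := by linear_combination hs2 / 4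
  have hc2 : ((((A : ℝ) + D) - s) / 2) ^ 2 - ((A : ℝ) + D) * ((((A : ℝ) + D) - s) / 2)
      + ((A : ℝ) * D - (B : ℝ) * C) = 0 := by linear_combination hs2 / 4
  have hcast : ∀ r : ℝ, r ^ 2 - ((A : ℝ) + D) * r + ((A : ℝ) * D - (B : ℝ) * C) = 0 →
      (r : ℂ) ^ 2 - ((A : ℂ) + D) * (r : ℂ) + ((A : ℂ) * D - (B : ℂ) * C) = 0 := by
    intro r hr
    have h : ((r ^ 2 - ((A : ℝ) + D) * r + ((A : ℝ) * D - (B : ℝ) * C) : ℝ) : ℂ) = 0 := by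
      rw [hr]; norm_num
    push_cast at h
    linear_combination h
  have hB0 : (B : ℂ) ≠ 0 := by
    have : (B : ℤ) ≠ 0 := by omega
    exact_mod_cast this
  -- construct an eigenvector from a root of the characteristic polynomial
  have mk : ∀ l : ℂ, l ^ 2 - ((A : ℂ) + D) * l + ((A : ℂ) * D - (B : ℂ) * C) = 0 →
      ∃ z : Fin 2 → ℂ, z ≠ 0 ∧
        Matrix.mulVec ((!![A, B; C, D]).map (Int.cast : ℤ → ℂ)) z = l • z := by
    intro l hl
    refine ⟨![(B : ℂ), l - (A : ℂ)], fun h => hB0 (by simpa using congrFun h 0), ?_⟩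
    funext i
    fin_cases i <;>
      simp [Matrix.mulVec, dotProduct, Fin.sum_univ_two, Matrix.map_apply]
    · ring
    · linear_combination -hl
  -- from an eigenvector, the characteristic polynomial vanishes
  have char_of : ∀ l : ℂ,
      (∃ z : Fin 2 → ℂ, z ≠ 0 ∧
        Matrix.mulVec ((!![A, B; C, D]).map (Int.cast : ℤ → ℂ)) z = l • z) →
      l ^ 2 - ((A : ℂ) + D) * l + ((A : ℂ) * D - (B : ℂ) * C) = 0 := by
    rintro l ⟨z, hz, he⟩
    have e0 := congrFun he 0
    have e1 := congrFun he 1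
    simp [Matrix.mulVec, dotProduct, Fin.sum_univ_two, Matrix.map_apply] at e0 e1
    by_contra hne
    apply hz
    have hz0 : z 0 = 0 := by
      have key : (l ^ 2 - ((A : ℂ) + D) * l + ((A : ℂ) * D - (B : ℂ) * C)) * z 0 = 0 := by
        linear_combination ((D : ℂ) - l) * e0 - (B : ℂ) * e1
      rcases mul_eq_zero.mp key with h | h
      · exact absurd h hne
      · exact h
    have hz1 : z 1 = 0 := by
      have key : (l ^ 2 - ((A : ℂ) + D) * l + ((A : ℂ) * D - (B : ℂ) * C)) * z 1 = 0 := by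
        linear_combination ((A : ℂ) - l) * e1 - (C : ℂ) * e0
      rcases mul_eq_zero.mp key with h | h
      · exact absurd h hne
      · exact h
    funext i
    fin_cases i <;> simp [hz0, hz1]
  constructor
  · refine ⟨((((A : ℝ) + D) + s) / 2 : ℝ), ((((A : ℝ) + D) - s) / 2 : ℝ), ?_, mk _ (hcast _ hc1),
      mk _ (hcast _ hc2)⟩
    intro h
    have : ((((A : ℝ) + D) + s) / 2 : ℝ) = ((((A : ℝ) + D) - s) / 2 : ℝ) := by exact_mod_cast h
    linarith
  · intro l hl n hn h1
    have hchar := char_of l hl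
    have habs : ‖l‖ = 1 := by
      have h := congrArg (‖·‖) h1
      rw [norm_pow, norm_one] at h
      have hn0 : n ≠ 0 := by omega
      rcases lt_trichotomy ‖l‖ 1 with hlt | heq | hgt
      · exact absurd h (ne_of_lt (pow_lt_one₀ (norm_nonneg l) hlt hn0))
      · exact heq
      · exact absurd h (ne_of_gt (one_lt_pow₀ hgt hn0))
    have hmul : l * (starRingEnd ℂ) l = 1 := by
      rw [Complex.mul_conj]
      rw [Complex.normSq_eq_norm_sq, habs]
      norm_num
    have hcharm : ((starRingEnd ℂ) l) ^ 2 - ((A : ℂ) + D) * ((starRingEnd ℂ) l)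
        + ((A : ℂ) * D - (B : ℂ) * C) = 0 := by
      have h := congrArg (starRingEnd ℂ) hchar
      simpa only [map_sub, map_add, map_pow, _root_.map_mul, map_intCast, map_zero] using h
    have hfac : (l - (starRingEnd ℂ) l) * (l + (starRingEnd ℂ) l - ((A : ℂ) + D)) = 0 := by
      linear_combination hchar - hcharm
    rcases mul_eq_zero.mp hfac with hre | hsum
    · -- l is real (l = conj l), and l^2 = 1
      have hlm : l = (starRingEnd ℂ) l := by linear_combination hre
      have hsq : (l - 1) * (l + 1) = 0 := by
        linear_combination hmul + l * hlm
      rcases mul_eq_zero.mp hsq with h | h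
      · have hl1 : l = 1 := by linear_combination h
        have hZ : ((1 - (A + D) + (A * D - B * C) : ℤ) : ℂ) = 0 := by
          push_cast
          linear_combination hchar - (l + 1 - ((A : ℂ) + D)) * hl1
        have heq : 1 - (A + D) + (A * D - B * C) = 0 := by exact_mod_cast hZ
        rcases hδ with hd | hd <;> rw [hd] at heq
        · have := hT3 hd; omega
        · omega
      · have hl1 : l = -1 := by linear_combination h
        have hZ : ((1 + (A + D) + (A * D - B * C) : ℤ) : ℂ) = 0 := by
          push_cast
          linear_combination hchar - (l - 1 - ((A : ℂ) + D)) * hl1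
        have heq : 1 + (A + D) + (A * D - B * C) = 0 := by exact_mod_cast hZ
        rcases hδ with hd | hd <;> rw [hd] at heq
        · have := hT3 hd; omega
        · omega
    · -- l + conj l = A + D, and l * conj l = 1, so det = 1 and trace = 2 Re l
      have hZ : ((A * D - B * C : ℤ) : ℂ) = 1 := by
        push_cast
        linear_combination hchar - l * hsum + hmul
      have hd1 : A * D - B * C = 1 := by exact_mod_cast hZ
      have h3 : (3 : ℝ) ≤ (A : ℝ) + D := by exact_mod_cast hT3 hd1
      have htr : ((A : ℂ) + D) = ((2 * l.re : ℝ) : ℂ) := by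
        rw [← Complex.add_conj]
        linear_combination -hsum
      have htr' : (A : ℝ) + D = 2 * l.re := by exact_mod_cast htr
      have hre := Complex.abs_re_le_norm l
      rw [habs] at hre
      have : l.re ≤ 1 := le_trans (le_abs_self _) hre
      linarith

/-- for a nonempty word `u` over the positive integers, `A_u` has two
distinct complex eigenvalues and no eigenvalue of `A_u` is a root of unity. -/
theorem stmt_11 (u : List ℕ) (hu : u ≠ []) (hpos : ∀ b ∈ u, 1 ≤ b) :
    (∃ l₁ l₂ : ℂ, l₁ ≠ l₂ ∧
      (∃ z : Fin 2 → ℂ, z ≠ 0 ∧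
        Matrix.mulVec ((Aword u).map (Int.cast : ℤ → ℂ)) z = l₁ • z) ∧
      (∃ z : Fin 2 → ℂ, z ≠ 0 ∧
        Matrix.mulVec ((Aword u).map (Int.cast : ℤ → ℂ)) z = l₂ • z)) ∧
    ∀ l : ℂ,
      (∃ z : Fin 2 → ℂ, z ≠ 0 ∧
        Matrix.mulVec ((Aword u).map (Int.cast : ℤ → ℂ)) z = l • z) →
      ∀ n : ℕ, 1 ≤ n → l ^ n ≠ 1 := by
  obtain ⟨hA0, hAB, hAC, hBD, hCD, hB1, hC1⟩ := Aword_inv u hu hpos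
  have hD1 : 1 ≤ Aword u 1 1 := le_trans hB1 hBD
  have hdet : (Aword u).det = Aword u 0 0 * Aword u 1 1 - Aword u 0 1 * Aword u 1 0 :=
    Matrix.det_fin_two _
  have hδ : Aword u 0 0 * Aword u 1 1 - Aword u 0 1 * Aword u 1 0 = 1 ∨
      Aword u 0 0 * Aword u 1 1 - Aword u 0 1 * Aword u 1 0 = -1 := by
    rw [← hdet, Aword_det]
    rcases Nat.even_or_odd u.length with h | h
    · left; exact h.neg_one_pow
    · right; exact h.neg_one_pow
  have hT1 : 1 ≤ Aword u 0 0 + Aword u 1 1 := by omega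
  have hT3 : Aword u 0 0 * Aword u 1 1 - Aword u 0 1 * Aword u 1 0 = 1 →
      3 ≤ Aword u 0 0 + Aword u 1 1 := by
    intro h
    have hlen : 2 ≤ u.length := by
      rw [← hdet, Aword_det] at h
      rcases u with _ | ⟨a, _ | ⟨b, v⟩⟩
      · exact absurd rfl hu
      · norm_num at h
      · simp
    exact Aword_trace u hlen hpos
  have hM : Aword u = !![Aword u 0 0, Aword u 0 1; Aword u 1 0, Aword u 1 1] :=
    Matrix.eta_fin_two _
  rw [hM]
  exact key_mat _ _ _ _ hB1 hδ hT1 hT3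
end

section
/- Let p be a prime, k ≥ 1, and let w be a recurrent infinite word over ℕ. Then for every m ≥ 0: φ_k(A_{w_m}) · U_k(T^m w) = U_k(w), where the left-hand side is the set { φ_k(A_{w_m})·M : M ∈ U_k(T^m w) }. -/
open Matrix Filter

lemma wordPrefix_length (w : ℕ → ℕ) (n : ℕ) : (wordPrefix w n).length = n := by
  simp [wordPrefix]

lemma occursAt_prefix_iff (w : ℕ → ℕ) (L s : ℕ) :
    occursAt w (wordPrefix w L) s ↔ ∀ i < L, w (s + i) = w i := by
  unfold occursAt
  rw [wordPrefix_length]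
  unfold wordPrefix
  rw [List.map_eq_map_iff]
  constructor
  · intro h i hi
    exact (h i (List.mem_range.mpr hi)).symm
  · intro h i hi
    exact (h i (List.mem_range.mp hi)).symm

lemma occursAt_prefix_zero (w : ℕ → ℕ) (L : ℕ) : occursAt w (wordPrefix w L) 0 := by
  rw [occursAt_prefix_iff]; intro i _; rw [Nat.zero_add]

lemma occursAt_trans {w : ℕ → ℕ} {u : List ℕ} {L s t : ℕ}
    (hL : occursAt w (wordPrefix w L) s) (hu : occursAt w u t)
    (hle : t + u.length ≤ L) : occursAt w u (s + t) := by
  rw [occursAt_prefix_iff] at hL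
  unfold occursAt at hu ⊢
  rw [hu]; rw [hu] at hle
  simp only [List.length_map, List.length_range] at hle ⊢
  rw [List.map_eq_map_iff]
  intro i hi
  rw [List.mem_range] at hi
  have : t + i < L := lt_of_lt_of_le (by omega) hle
  rw [show s + t + i = s + (t + i) by ring, hL (t + i) this]

lemma wordPrefix_add (w : ℕ → ℕ) (m j : ℕ) :
    wordPrefix w (m + j) = wordPrefix w m ++ wordPrefix (shiftW w m) j := by
  unfold wordPrefix
  rw [List.range_add, List.map_append, List.map_map]
  rfl

lemma wordPrefix_occ {w : ℕ → ℕ} {L s L' : ℕ} (h : occursAt w (wordPrefix w L) s)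
    (h' : L' ≤ L) : wordPrefix (shiftW w s) L' = wordPrefix w L' := by
  rw [occursAt_prefix_iff] at h
  unfold wordPrefix
  rw [List.map_eq_map_iff]
  intro i hi
  rw [List.mem_range] at hi
  exact h i (lt_of_lt_of_le hi h')

lemma Aword_occ {w : ℕ → ℕ} {L s L' : ℕ} (h : occursAt w (wordPrefix w L) s)
    (h' : L' ≤ L) :
    Aword (wordPrefix w (s + L')) = Aword (wordPrefix w s) * Aword (wordPrefix w L') := by
  rw [wordPrefix_add, Aword_append, wordPrefix_occ h h']

lemma isUnit_AwordZMod (N : ℕ) (u : List ℕ) :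
    IsUnit ((Aword u).map (Int.cast : ℤ → ZMod N)) := by
  have hm : (Aword u).map (Int.cast : ℤ → ZMod N)
      = (Int.castRingHom (ZMod N)).mapMatrix (Aword u) := rfl
  rw [Matrix.isUnit_iff_isUnit_det, hm, ← RingHom.map_det, Aword_det]
  have : ((((-1 : ℤ)) ^ u.length : ℤ) : ZMod N) = (-1 : ZMod N) ^ u.length := by push_cast; ring
  show IsUnit ((((-1 : ℤ) ^ u.length : ℤ) : ZMod N))
  rw [this]
  exact IsUnit.pow _ isUnit_one.neg

lemma AwordZMod_mul (N : ℕ) (u v : List ℕ) :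
    ((Aword u * Aword v)).map (Int.cast : ℤ → ZMod N)
      = (Aword u).map (Int.cast : ℤ → ZMod N) * (Aword v).map (Int.cast : ℤ → ZMod N) := by
  have h := RingHom.map_mul ((Int.castRingHom (ZMod N)).mapMatrix) (Aword u) (Aword v)
  simpa [RingHom.mapMatrix_apply] using h

lemma crux (p k : ℕ) [NeZero (p ^ k)] (w : ℕ → ℕ) (hrec : Recurrent w) (m n : ℕ) :
    ∃ t, m ≤ t ∧ (Aword (wordPrefix w t)).map (Int.cast : ℤ → ZMod (p ^ k))
      = (Aword (wordPrefix w n)).map (Int.cast : ℤ → ZMod (p ^ k)) := by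
  set g : ℕ → Matrix (Fin 2) (Fin 2) (ZMod (p ^ k)) :=
    fun t => (Aword (wordPrefix w t)).map Int.cast with hg
  show ∃ t, m ≤ t ∧ g t = g n
  have gmul : ∀ {L s L' : ℕ}, occursAt w (wordPrefix w L) s → L' ≤ L →
      g (s + L') = g s * g L' := by
    intro L s L' h h'
    simp only [hg]
    rw [Aword_occ h h', AwordZMod_mul]
  have hchoice : ∀ L : ℕ, ∃ s, m ≤ s ∧ occursAt w (wordPrefix w L) s :=
    fun L => hrec (wordPrefix w L) ⟨0, occursAt_prefix_zero w L⟩ m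
  choose occ hocc1 hocc2 using hchoice
  set S : ℕ → ℕ := fun i => Nat.rec n (fun _ Si => occ Si + Si) i with hS
  have hS0 : S 0 = n := rfl
  have hSsucc : ∀ i, S (i + 1) = occ (S i) + S i := fun i => rfl
  set E : ℕ → ℕ → ℕ :=
    fun i c => Nat.rec 0 (fun c' Ec => occ (S (i + c')) + Ec) c with hE
  have hE0 : ∀ i, E i 0 = 0 := fun _ => rfl
  have hEsucc : ∀ i c, E i (c + 1) = occ (S (i + c)) + E i c := fun _ _ => rfl
  have H1 : ∀ i c, occursAt w (wordPrefix w (S i)) (E i c) ∧ E i c + S i = S (i + c) := by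
    intro i c
    induction c with
    | zero =>
      refine ⟨?_, ?_⟩
      · rw [hE0]; exact occursAt_prefix_zero w (S i)
      · rw [hE0, Nat.zero_add, Nat.add_zero]
    | succ c ih =>
      obtain ⟨ho, ha⟩ := ih
      constructor
      · rw [hEsucc]
        apply occursAt_trans (hocc2 (S (i + c))) ho
        rw [wordPrefix_length]; omega
      · rw [hEsucc, show i + (c + 1) = (i + c) + 1 from rfl, hSsucc]
        omega
  have H3 : ∀ i c, g (E i (c + 1)) = g (occ (S (i + c))) * g (E i c) := by
    intro i c
    rw [hEsucc]
    exact gmul (hocc2 (S (i + c))) (by have := (H1 i c).2; omega)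
  have gzero : g 0 = 1 := by
    simp only [hg]
    have : wordPrefix w 0 = [] := rfl
    rw [this]
    show (Aword []).map _ = 1
    rw [show Aword [] = 1 from rfl]
    exact Matrix.map_one _ Int.cast_zero Int.cast_one
  have H4 : ∀ i c, g (E 0 (i + c)) = g (E i c) * g (E 0 i) := by
    intro i c
    induction c with
    | zero => rw [Nat.add_zero, hE0, gzero, one_mul]
    | succ c ih =>
      rw [show i + (c + 1) = (i + c) + 1 from rfl, H3 0 (i + c), Nat.zero_add, ih,
        H3 i c, mul_assoc]
  have H5 : ∀ i c, m ≤ E i (c + 1) := by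
    intro i c
    rw [hEsucc]
    have := hocc1 (S (i + c))
    omega
  have main : ∀ i j : ℕ, i < j → g (E 0 i) = g (E 0 j) → ∃ t, m ≤ t ∧ g t = g n := by
    intro i j hij heq
    obtain ⟨c, rfl⟩ : ∃ c, j = i + (c + 1) := ⟨j - i - 1, by omega⟩
    have h4 := H4 i (c + 1)
    rw [← heq] at h4
    have hunit : IsUnit (g (E 0 i)) := isUnit_AwordZMod _ _
    have h1 : g (E i (c + 1)) = 1 :=
      hunit.mul_right_cancel (by rw [← h4, one_mul])
    have hocc' := (H1 i (c + 1)).1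
    have hn : n ≤ S i := by
      have h2 := (H1 0 i).2
      rw [Nat.zero_add, hS0] at h2
      omega
    refine ⟨E i (c + 1) + n, le_trans (H5 i c) (Nat.le_add_right _ _), ?_⟩
    rw [gmul hocc' hn, h1, one_mul]
  obtain ⟨i, j, hne, heq⟩ := Finite.exists_ne_map_eq_of_infinite (fun j => g (E 0 j))
  rcases Nat.lt_or_ge i j with h | h
  · exact main i j h heq
  · exact main j i (by omega) heq.symm

/-- for a recurrent word `w`, `φ_k(A_{w_m}) · U_k(T^m w) = U_k(w)`. -/
theorem stmt_12 (p : ℕ) [Fact p.Prime] (k : ℕ) (hk : 1 ≤ k)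
    (w : ℕ → ℕ) (hrec : Recurrent w) (m : ℕ) :
    (fun M : Matrix (Fin 2) (Fin 2) (ZMod (p ^ k)) =>
        ((Aword (wordPrefix w m)).map (Int.cast : ℤ → ZMod (p ^ k))) * M) ''
      Uk p k (shiftW w m) = Uk p k w := by
  haveI : NeZero (p ^ k) := ⟨pow_ne_zero k (Fact.out : p.Prime).ne_zero⟩
  ext M
  constructor
  · rintro ⟨X, ⟨j, rfl⟩, rfl⟩
    exact ⟨m + j, by rw [wordPrefix_add, Aword_append, AwordZMod_mul]⟩
  · rintro ⟨nn, rfl⟩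
    obtain ⟨t, htm, hteq⟩ := crux p k w hrec m nn
    refine ⟨(Aword (wordPrefix (shiftW w m) (t - m))).map Int.cast, ⟨t - m, rfl⟩, ?_⟩
    show (Aword (wordPrefix w m)).map Int.cast * (Aword (wordPrefix (shiftW w m) (t - m))).map Int.cast = _
    rw [← AwordZMod_mul, ← Aword_append, ← wordPrefix_add,
      show m + (t - m) = t from by omega, hteq]
end

section
/- Let p be a prime, k ≥ 1, and let w be a recurrent infinite word over ℕ. Then there exists n ∈ ℕ such that for every m ≥ 0 for which the prefix w_n of w of length n is also a prefix of T^m w, one has φ_k(A_{w_m}) · U_k(w) = U_k(w), where the left-hand side is the set { φ_k(A_{w_m})·M : M ∈ U_k(w) }. -/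
open Matrix Filter

lemma isUnit_det_Aword (u : List ℕ) : IsUnit (Aword u).det := by
  induction u with
  | nil => simp [Aword]
  | cons a u ih =>
    have : Aword (a :: u) = Amat a * Aword u := by simp [Aword]
    rw [this, Matrix.det_mul]
    have hA : (Amat a).det = -1 := by simp [Amat, Matrix.det_fin_two_of]
    rw [hA]
    exact (isUnit_one.neg).mul ih

/-- for a recurrent word `w` there is `n` such that whenever `w_n` is a
prefix of `T^m w`, `φ_k(A_{w_m}) · U_k(w) = U_k(w)`. -/
theorem stmt_14 (p : ℕ) [Fact p.Prime] (k : ℕ) (hk : 1 ≤ k)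
    (w : ℕ → ℕ) (hrec : Recurrent w) :
    ∃ n : ℕ, ∀ m : ℕ, wordPrefix w n = wordPrefix (shiftW w m) n →
      (fun M : Matrix (Fin 2) (Fin 2) (ZMod (p ^ k)) =>
          ((Aword (wordPrefix w m)).map (Int.cast : ℤ → ZMod (p ^ k))) * M) ''
        Uk p k w = Uk p k w := by
  classical
  haveI : NeZero (p ^ k) := ⟨pow_ne_zero k (Fact.out : p.Prime).ne_zero⟩
  set g : ℕ → Matrix (Fin 2) (Fin 2) (ZMod (p ^ k)) :=
    fun j => (Aword (wordPrefix w j)).map (Int.cast : ℤ → ZMod (p ^ k)) with hg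
  have hUk : Uk p k w = Set.range g := by
    ext M
    simp [Uk, hg, Set.range, eq_comm]
  have hch : ∀ x : Set.range g, ∃ j, g j = (x : Matrix (Fin 2) (Fin 2) (ZMod (p ^ k)))
    := fun x => x.2
  choose F hF using hch
  obtain ⟨n, hn⟩ := (Set.finite_range F).bddAbove
  refine ⟨n, fun m hm => ?_⟩
  -- prefixes of length ≤ n of w and shiftW w m agree
  have hpt : ∀ j ≤ n, wordPrefix (shiftW w m) j = wordPrefix w j := by
    intro j hj
    have hmap : ∀ i < n, shiftW w m i = w i := by
      intro i hi
      have h2 := congrArg (fun l => l[i]?) hm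
      simpa [wordPrefix, List.getElem?_map, List.getElem?_range, hi] using h2.symm
    simp only [wordPrefix]
    apply List.map_congr_left
    intro i hi
    exact hmap i (lt_of_lt_of_le (List.mem_range.mp hi) hj)
  -- key multiplication identity
  have hmul : ∀ j ≤ n, g (m + j) =
      ((Aword (wordPrefix w m)).map (Int.cast : ℤ → ZMod (p ^ k))) * g j := by
    intro j hj
    have h1 : Aword (wordPrefix w (m + j)) =
        Aword (wordPrefix w m) * Aword (wordPrefix w j) := by
      rw [wordPrefix_add, Aword_append, hpt j hj]
    have h2 : g (m + j) = (Aword (wordPrefix w (m + j))).map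
        (Int.cast : ℤ → ZMod (p ^ k)) := rfl
    rw [h2, h1]
    exact (Int.castRingHom (ZMod (p ^ k))).mapMatrix.map_mul _ _
  set φm : Matrix (Fin 2) (Fin 2) (ZMod (p ^ k)) :=
    (Aword (wordPrefix w m)).map (Int.cast : ℤ → ZMod (p ^ k)) with hφm
  -- φm is a unit
  have hdet : IsUnit φm.det := by
    have : φm = (Int.castRingHom (ZMod (p ^ k))).mapMatrix (Aword (wordPrefix w m)) := rfl
    rw [this, ← RingHom.map_det]
    exact (isUnit_det_Aword _).map _
  have hunit : IsUnit φm := (Matrix.isUnit_iff_isUnit_det _).mpr hdet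
  obtain ⟨u, hu⟩ := hunit
  have hinj : Function.Injective (fun M => φm * M) := by
    intro X Y h
    have := congrArg (fun Z => (↑u⁻¹ : Matrix (Fin 2) (Fin 2) (ZMod (p ^ k))) * Z) h
    simpa [← hu, ← mul_assoc] using this
  -- subset
  have hsub : (fun M : Matrix (Fin 2) (Fin 2) (ZMod (p ^ k)) => φm * M) '' Uk p k w
      ⊆ Uk p k w := by
    rintro x ⟨M, hM, rfl⟩
    rw [hUk] at hM ⊢
    obtain ⟨j, rfl⟩ := hM
    set j' := F ⟨g j, Set.mem_range_self j⟩ with hj'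
    have hj'le : j' ≤ n := hn (Set.mem_range_self _)
    have hgj' : g j' = g j := hF _
    exact ⟨m + j', by rw [hmul j' hj'le, hgj']⟩
  -- equality by cardinality
  have hfin : (Uk p k w).Finite := Set.toFinite _
  refine Set.eq_of_subset_of_ncard_le hsub ?_ hfin
  rw [Set.ncard_image_of_injective _ hinj]
end

section
/- Let p be a prime and v ∈ ℚ_p such that v is not the image of any rational number under the embedding ℚ → ℚ_p, and such that a·v² + b·v + c = 0 for some integers a, b, c not all zero. Then there exists ε > 0 such that for every pair of integers (a', b') ≠ (0,0): |a'·v + b'|_p / max(|v|_p, 1) ≥ ε / max(a'², b'²). -/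
open Matrix Filter

lemma int_norm_lower (p : ℕ) [hp : Fact p.Prime] (n : ℤ) (hn : n ≠ 0) :
    (|(n : ℝ)|)⁻¹ ≤ ‖(n : ℚ_[p])‖ := by
  have hn' : (n : ℚ_[p]) ≠ 0 := Int.cast_ne_zero.mpr hn
  rw [Padic.norm_eq_zpow_neg_valuation hn', Padic.valuation_intCast]
  have hdvd : (p : ℤ) ^ padicValInt p n ∣ |n| := (dvd_abs _ _).mpr (padicValInt_dvd n)
  have hle : (p : ℤ) ^ padicValInt p n ≤ |n| := Int.le_of_dvd (abs_pos.mpr hn) hdvd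
  have hler : (p : ℝ) ^ (padicValInt p n : ℕ) ≤ |(n : ℝ)| := by
    push_cast at hle ⊢
    exact_mod_cast hle
  have hp0 : (0 : ℝ) < (p : ℝ) := by exact_mod_cast hp.out.pos
  have hpos : (0 : ℝ) < (p : ℝ) ^ (padicValInt p n : ℕ) := by positivity
  rw [_root_.zpow_neg, zpow_natCast]
  exact inv_anti₀ hpos hler

/-- a quadratic irrational `v ∈ ℚ_p` is `p`-adically badly
approximable. -/
theorem stmt_15 (p : ℕ) [Fact p.Prime] (v : ℚ_[p])
    (hirr : ∀ r : ℚ, (r : ℚ_[p]) ≠ v)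
    (hquad : ∃ a b c : ℤ, ¬(a = 0 ∧ b = 0 ∧ c = 0) ∧
      (a : ℚ_[p]) * v ^ 2 + (b : ℚ_[p]) * v + (c : ℚ_[p]) = 0) :
    ∃ ε > 0, ∀ a' b' : ℤ, ¬(a' = 0 ∧ b' = 0) →
      ε / max ((a' : ℝ) ^ 2) ((b' : ℝ) ^ 2) ≤
        ‖(a' : ℚ_[p]) * v + (b' : ℚ_[p])‖ / max ‖v‖ 1 := by
  obtain ⟨a, b, c, h0, heq⟩ := hquad
  -- a ≠ 0
  have ha : a ≠ 0 := by
    intro ha0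
    subst ha0
    simp only [Int.cast_zero, zero_mul, zero_add] at heq
    by_cases hb : b = 0
    · subst hb
      simp only [Int.cast_zero, zero_mul, zero_add] at heq
      exact h0 ⟨rfl, rfl, by exact_mod_cast heq⟩
    · have hbP : (b : ℚ_[p]) ≠ 0 := Int.cast_ne_zero.mpr hb
      apply hirr (-(c : ℚ) / (b : ℚ))
      push_cast
      field_simp
      linear_combination -heq
  have haP : (a : ℚ_[p]) ≠ 0 := Int.cast_ne_zero.mpr ha
  set vb : ℚ_[p] := -(b : ℚ_[p]) / (a : ℚ_[p]) - v with hvb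
  have key : ∀ a' b' : ℤ,
      (a : ℚ_[p]) * ((a' : ℚ_[p]) * v + b') * ((a' : ℚ_[p]) * vb + b') =
        ((c * a' ^ 2 - b * (a' * b') + a * b' ^ 2 : ℤ) : ℚ_[p]) := by
    intro a' b'
    rw [hvb]
    push_cast
    field_simp
    ring_nf
    linear_combination (-(a' : ℚ_[p]) ^ 2) * heq
  -- N ≠ 0
  have hNne : ∀ a' b' : ℤ, ¬(a' = 0 ∧ b' = 0) →
      (c * a' ^ 2 - b * (a' * b') + a * b' ^ 2 : ℤ) ≠ 0 := by
    intro a' b' hab hN0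
    have hkey := key a' b'
    rw [hN0] at hkey
    simp only [Int.cast_zero] at hkey
    rcases mul_eq_zero.mp hkey with h | hY
    · rcases mul_eq_zero.mp h with h' | hX
      · exact haP h'
      · by_cases ha' : a' = 0
        · subst ha'
          simp only [Int.cast_zero, zero_mul, zero_add] at hX
          exact hab ⟨rfl, by exact_mod_cast hX⟩
        · have ha'P : (a' : ℚ_[p]) ≠ 0 := Int.cast_ne_zero.mpr ha'
          apply hirr (-(b' : ℚ) / (a' : ℚ))
          push_cast
          field_simp
          linear_combination -hX
    · by_cases ha' : a' = 0
      · subst ha'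
        simp only [Int.cast_zero, zero_mul, zero_add] at hY
        exact hab ⟨rfl, by exact_mod_cast hY⟩
      · have ha'P : (a' : ℚ_[p]) ≠ 0 := Int.cast_ne_zero.mpr ha'
        apply hirr (-(b : ℚ) / (a : ℚ) + (b' : ℚ) / (a' : ℚ))
        rw [hvb] at hY
        push_cast
        field_simp
        field_simp at hY
        linear_combination hY
  set C : ℝ := max ‖vb‖ 1 with hC
  set D : ℝ := max ‖v‖ 1 with hD
  set S : ℝ := ((|a| + |b| + |c| : ℤ) : ℝ) with hS
  have hC1 : (1 : ℝ) ≤ C := le_max_right _ _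
  have hD1 : (1 : ℝ) ≤ D := le_max_right _ _
  have hS1 : (1 : ℝ) ≤ S := by
    have : (1 : ℤ) ≤ |a| + |b| + |c| := by
      have := Int.one_le_abs ha
      have h2 := abs_nonneg b
      have h3 := abs_nonneg c
      omega
    rw [hS]
    exact_mod_cast this
  have hC0 : (0 : ℝ) < C := lt_of_lt_of_le one_pos hC1
  have hD0 : (0 : ℝ) < D := lt_of_lt_of_le one_pos hD1
  have hS0 : (0 : ℝ) < S := lt_of_lt_of_le one_pos hS1
  refine ⟨(S * C * D)⁻¹, by positivity, ?_⟩
  intro a' b' hab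
  set N : ℤ := c * a' ^ 2 - b * (a' * b') + a * b' ^ 2 with hNdef
  have hN : N ≠ 0 := hNne a' b' hab
  set M : ℝ := max ((a' : ℝ) ^ 2) ((b' : ℝ) ^ 2) with hM
  have hM0 : (0 : ℝ) < M := by
    rcases not_and_or.mp hab with h | h
    · exact lt_max_of_lt_left (by have : (a':ℝ) ≠ 0 := Int.cast_ne_zero.mpr h; positivity)
    · exact lt_max_of_lt_right (by have : (b':ℝ) ≠ 0 := Int.cast_ne_zero.mpr h; positivity)
  -- |N| ≤ S * M
  have habs : |(N : ℝ)| ≤ S * M := by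
    have h1 : |(a' : ℝ) * b'| ≤ M := by
      rcases le_total ((a':ℝ)^2) ((b':ℝ)^2) with h | h
      · have : |(a' : ℝ) * b'| ≤ (b' : ℝ)^2 := by
          rw [abs_mul]
          nlinarith [abs_nonneg (a':ℝ), abs_nonneg (b':ℝ), sq_abs (a':ℝ), sq_abs (b':ℝ)]
        exact this.trans (le_max_right _ _)
      · have : |(a' : ℝ) * b'| ≤ (a' : ℝ)^2 := by
          rw [abs_mul]
          nlinarith [abs_nonneg (a':ℝ), abs_nonneg (b':ℝ), sq_abs (a':ℝ), sq_abs (b':ℝ)]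
        exact this.trans (le_max_left _ _)
    have h2 : (a' : ℝ)^2 ≤ M := le_max_left _ _
    have h3 : (b' : ℝ)^2 ≤ M := le_max_right _ _
    have hNr : (N : ℝ) = (c : ℝ) * (a':ℝ)^2 - (b:ℝ) * ((a':ℝ) * (b':ℝ)) + (a:ℝ) * (b':ℝ)^2 := by
      rw [hNdef]; push_cast; ring
    have hSr : S = |(a:ℝ)| + |(b:ℝ)| + |(c:ℝ)| := by
      rw [hS]; push_cast; ring
    rw [hNr, hSr]
    calc |(c : ℝ) * (a':ℝ)^2 - (b:ℝ) * ((a':ℝ) * (b':ℝ)) + (a:ℝ) * (b':ℝ)^2|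
        ≤ |(c : ℝ) * (a':ℝ)^2 - (b:ℝ) * ((a':ℝ) * (b':ℝ))| + |(a:ℝ) * (b':ℝ)^2| := abs_add_le _ _
      _ ≤ |(c : ℝ) * (a':ℝ)^2| + |(b:ℝ) * ((a':ℝ) * (b':ℝ))| + |(a:ℝ) * (b':ℝ)^2| := by
          have := abs_sub ((c : ℝ) * (a':ℝ)^2) ((b:ℝ) * ((a':ℝ) * (b':ℝ)))
          linarith [abs_sub_abs_le_abs_sub ((c : ℝ) * (a':ℝ)^2) ((b:ℝ) * ((a':ℝ) * (b':ℝ)))]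
      _ ≤ (|(a:ℝ)| + |(b:ℝ)| + |(c:ℝ)|) * M := by
          have t1 : |(c : ℝ) * (a':ℝ)^2| ≤ |(c:ℝ)| * M := by
            rw [abs_mul, abs_of_nonneg (by positivity : (0:ℝ) ≤ (a':ℝ)^2)]
            exact mul_le_mul_of_nonneg_left h2 (abs_nonneg _)
          have t2 : |(b : ℝ) * ((a':ℝ) * (b':ℝ))| ≤ |(b:ℝ)| * M := by
            rw [abs_mul]
            exact mul_le_mul_of_nonneg_left h1 (abs_nonneg _)
          have t3 : |(a : ℝ) * (b':ℝ)^2| ≤ |(a:ℝ)| * M := by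
            rw [abs_mul, abs_of_nonneg (by positivity : (0:ℝ) ≤ (b':ℝ)^2)]
            exact mul_le_mul_of_nonneg_left h3 (abs_nonneg _)
          linarith
  -- norm identity
  set X : ℚ_[p] := (a' : ℚ_[p]) * v + (b' : ℚ_[p]) with hXdef
  set Y : ℚ_[p] := (a' : ℚ_[p]) * vb + (b' : ℚ_[p]) with hYdef
  have hNnorm : ‖(N : ℚ_[p])‖ = ‖(a : ℚ_[p])‖ * ‖X‖ * ‖Y‖ := by
    rw [← key a' b', norm_mul, norm_mul]
  have hYle : ‖Y‖ ≤ C := by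
    rw [hYdef]
    refine le_trans (Padic.nonarchimedean _ _) (max_le ?_ ?_)
    · rw [norm_mul]
      calc ‖(a' : ℚ_[p])‖ * ‖vb‖ ≤ 1 * ‖vb‖ :=
            mul_le_mul_of_nonneg_right (Padic.norm_int_le_one _) (norm_nonneg _)
        _ = ‖vb‖ := one_mul _
        _ ≤ C := le_max_left _ _
    · exact le_trans (Padic.norm_int_le_one _) hC1
  have hNup : ‖(N : ℚ_[p])‖ ≤ ‖X‖ * C := by
    rw [hNnorm]
    have h1 := Padic.norm_int_le_one (p := p) a
    rw [mul_assoc]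
    exact le_trans (mul_le_of_le_one_left (mul_nonneg (norm_nonneg X) (norm_nonneg Y)) h1)
      (mul_le_mul_of_nonneg_left hYle (norm_nonneg X))
  have hNlow : (S * M)⁻¹ ≤ ‖(N : ℚ_[p])‖ := by
    have h1 : (|(N : ℝ)|)⁻¹ ≤ ‖(N : ℚ_[p])‖ := int_norm_lower p N hN
    have h2 : (0 : ℝ) < |(N : ℝ)| := abs_pos.mpr (by exact_mod_cast hN)
    exact le_trans (inv_anti₀ h2 habs) h1
  have hXlow : (S * M * C)⁻¹ ≤ ‖X‖ := by
    have h := le_trans hNlow hNup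
    rw [mul_inv, ← div_eq_mul_inv]
    rw [div_le_iff₀ hC0]
    linarith
  rw [div_le_div_iff₀ hM0 hD0]
  have heq2 : (S * C * D)⁻¹ * D = (S * M * C)⁻¹ * M := by
    field_simp
  rw [heq2]
  exact mul_le_mul_of_nonneg_right hXlow hM0.le
end

section
/- Let p be a prime and let x = (x₁,x₂) ∈ ℚ_p² be a nonzero vector lying in PBad. Then for every 2×2 integer matrix A with det A = 1 or −1, the vector A·x also lies in PBad. -/
open Matrix Filter

set_option maxHeartbeats 2000000 in
/-- `PBad` is invariant under unimodular integer matrices. -/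
theorem stmt_16 (p : ℕ) [Fact p.Prime] (x : Fin 2 → ℚ_[p]) (hx : x ≠ 0)
    (hPB : ∃ ε > 0, PBadE p ε x)
    (A : Matrix (Fin 2) (Fin 2) ℤ) (hdet : A.det = 1 ∨ A.det = -1) :
    ∃ ε > 0, PBadE p ε (Matrix.mulVec (matQ p A) x) := by
  obtain ⟨ε, hε, hP⟩ := hPB
  set K : ℝ := 2 * ((A 0 0 : ℝ) ^ 2 + (A 0 1 : ℝ) ^ 2 + (A 1 0 : ℝ) ^ 2 + (A 1 1 : ℝ) ^ 2 + 1)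
    with hKdef
  have hKpos : 0 < K := by positivity
  refine ⟨ε / K, by positivity, ?_⟩
  intro a b hab
  set y := Matrix.mulVec (matQ p A) x with hy
  have hy0 : y 0 = (A 0 0 : ℚ_[p]) * x 0 + (A 0 1 : ℚ_[p]) * x 1 := by
    simp [hy, Matrix.mulVec, dotProduct, Fin.sum_univ_two, matQ, Matrix.map_apply]
  have hy1 : y 1 = (A 1 0 : ℚ_[p]) * x 0 + (A 1 1 : ℚ_[p]) * x 1 := by
    simp [hy, Matrix.mulVec, dotProduct, Fin.sum_univ_two, matQ, Matrix.map_apply]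
  -- x is nonzero, so max of norms positive
  have hx01 : x 0 ≠ 0 ∨ x 1 ≠ 0 := by
    by_contra h
    push_neg at h
    apply hx
    funext i
    fin_cases i <;> simp [h.1, h.2]
  have hX : 0 < max ‖x 0‖ ‖x 1‖ := by
    rcases hx01 with h | h
    · exact lt_max_of_lt_left (norm_pos_iff.mpr h)
    · exact lt_max_of_lt_right (norm_pos_iff.mpr h)
  have hdetQ : ((A.det : ℤ) : ℚ_[p]) ≠ 0 := by
    rcases hdet with h | h <;> simp [h]
  -- y nonzero
  have hY : 0 < max ‖y 0‖ ‖y 1‖ := by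
    by_contra hc
    push_neg at hc
    have h0 : ‖y 0‖ = 0 := le_antisymm (le_trans (le_max_left _ _) hc) (norm_nonneg _)
    have h1 : ‖y 1‖ = 0 := le_antisymm (le_trans (le_max_right _ _) hc) (norm_nonneg _)
    rw [norm_eq_zero] at h0 h1
    have e0 : ((A.det : ℤ) : ℚ_[p]) * x 0 = (A 1 1 : ℚ_[p]) * y 0 - (A 0 1 : ℚ_[p]) * y 1 := by
      rw [hy0, hy1, Matrix.det_fin_two]; push_cast; ring
    have e1 : ((A.det : ℤ) : ℚ_[p]) * x 1 = (A 0 0 : ℚ_[p]) * y 1 - (A 1 0 : ℚ_[p]) * y 0 := by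
      rw [hy0, hy1, Matrix.det_fin_two]; push_cast; ring
    rw [h0, h1] at e0 e1
    simp only [mul_zero, sub_zero, zero_sub, neg_zero] at e0 e1
    have hx0 : x 0 = 0 := by
      rcases mul_eq_zero.mp e0 with h | h
      · exact absurd h hdetQ
      · exact h
    have hx1 : x 1 = 0 := by
      rcases mul_eq_zero.mp e1 with h | h
      · exact absurd h hdetQ
      · exact h
    exact absurd (lt_max_iff.mp hX) (by simp [hx0, hx1])
  -- y norms bounded by x norms
  have hnb : ∀ (c : ℤ) (z : ℚ_[p]), ‖(c : ℚ_[p]) * z‖ ≤ ‖z‖ := fun c z => by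
    rw [norm_mul]
    exact mul_le_of_le_one_left (norm_nonneg _) (Padic.norm_int_le_one c)
  have hle : max ‖y 0‖ ‖y 1‖ ≤ max ‖x 0‖ ‖x 1‖ := by
    apply max_le
    · calc ‖y 0‖ ≤ max ‖(A 0 0 : ℚ_[p]) * x 0‖ ‖(A 0 1 : ℚ_[p]) * x 1‖ := by
            rw [hy0]; exact Padic.nonarchimedean _ _
        _ ≤ max ‖x 0‖ ‖x 1‖ := max_le_max (hnb _ _) (hnb _ _)
    · calc ‖y 1‖ ≤ max ‖(A 1 0 : ℚ_[p]) * x 0‖ ‖(A 1 1 : ℚ_[p]) * x 1‖ := by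
            rw [hy1]; exact Padic.nonarchimedean _ _
        _ ≤ max ‖x 0‖ ‖x 1‖ := max_le_max (hnb _ _) (hnb _ _)
  -- the transformed integer pair
  set a' : ℤ := a * A 0 0 + b * A 1 0 with ha'
  set b' : ℤ := a * A 0 1 + b * A 1 1 with hb'
  have hab' : ¬(a' = 0 ∧ b' = 0) := by
    rintro ⟨h1, h2⟩
    apply hab
    have hA : a * A.det = a' * A 1 1 - b' * A 1 0 := by
      rw [Matrix.det_fin_two, ha', hb']; ring
    have hB : b * A.det = b' * A 0 0 - a' * A 0 1 := by
      rw [Matrix.det_fin_two, ha', hb']; ring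
    rw [h1, h2] at hA hB
    simp only [zero_mul, sub_zero, zero_sub, sub_self] at hA hB
    rcases hdet with h | h <;> rw [h] at hA hB <;> constructor <;> omega
  have hid : (a : ℚ_[p]) * y 0 + (b : ℚ_[p]) * y 1
      = (a' : ℚ_[p]) * x 0 + (b' : ℚ_[p]) * x 1 := by
    rw [hy0, hy1, ha', hb']; push_cast; ring
  have hmain := hP a' b' hab'
  have hM : 0 < max ((a : ℝ) ^ 2) ((b : ℝ) ^ 2) := by
    have : a ≠ 0 ∨ b ≠ 0 := by tauto
    rcases this with h | h
    · exact lt_max_of_lt_left (by positivity)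
    · exact lt_max_of_lt_right (by positivity)
  have hM' : 0 < max ((a' : ℝ) ^ 2) ((b' : ℝ) ^ 2) := by
    have : a' ≠ 0 ∨ b' ≠ 0 := by tauto
    rcases this with h | h
    · exact lt_max_of_lt_left (by positivity)
    · exact lt_max_of_lt_right (by positivity)
  have hca : (a' : ℝ) = (a : ℝ) * (A 0 0 : ℝ) + (b : ℝ) * (A 1 0 : ℝ) := by
    rw [ha']; push_cast; ring
  have hcb : (b' : ℝ) = (a : ℝ) * (A 0 1 : ℝ) + (b : ℝ) * (A 1 1 : ℝ) := by
    rw [hb']; push_cast; ring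
  have hKM : max ((a' : ℝ) ^ 2) ((b' : ℝ) ^ 2) ≤ K * max ((a : ℝ) ^ 2) ((b : ℝ) ^ 2) := by
    have ham : (a : ℝ) ^ 2 ≤ max ((a : ℝ) ^ 2) ((b : ℝ) ^ 2) := le_max_left _ _
    have hbm : (b : ℝ) ^ 2 ≤ max ((a : ℝ) ^ 2) ((b : ℝ) ^ 2) := le_max_right _ _
    apply max_le
    · rw [hca, hKdef]
      nlinarith [sq_nonneg ((a : ℝ) * (A 0 0 : ℝ) - (b : ℝ) * (A 1 0 : ℝ)),
        sq_nonneg (A 0 0 : ℝ), sq_nonneg (A 1 0 : ℝ), sq_nonneg (A 0 1 : ℝ),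
        sq_nonneg (A 1 1 : ℝ), hM.le,
        mul_le_mul_of_nonneg_right ham (sq_nonneg (A 0 0 : ℝ)),
        mul_le_mul_of_nonneg_right hbm (sq_nonneg (A 1 0 : ℝ))]
    · rw [hcb, hKdef]
      nlinarith [sq_nonneg ((a : ℝ) * (A 0 1 : ℝ) - (b : ℝ) * (A 1 1 : ℝ)),
        sq_nonneg (A 0 0 : ℝ), sq_nonneg (A 1 0 : ℝ), sq_nonneg (A 0 1 : ℝ),
        sq_nonneg (A 1 1 : ℝ), hM.le,
        mul_le_mul_of_nonneg_right ham (sq_nonneg (A 0 1 : ℝ)),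
        mul_le_mul_of_nonneg_right hbm (sq_nonneg (A 1 1 : ℝ))]
  rw [hid, div_div]
  calc ε / (K * max ((a : ℝ) ^ 2) ((b : ℝ) ^ 2))
      ≤ ε / max ((a' : ℝ) ^ 2) ((b' : ℝ) ^ 2) := by
        apply div_le_div_of_nonneg_left hε.le hM' hKM
    _ ≤ ‖(a' : ℚ_[p]) * x 0 + (b' : ℚ_[p]) * x 1‖ / max ‖x 0‖ ‖x 1‖ := hmain
    _ ≤ ‖(a' : ℚ_[p]) * x 0 + (b' : ℚ_[p]) * x 1‖ / max ‖y 0‖ ‖y 1‖ := by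
        apply div_le_div_of_nonneg_left (norm_nonneg _) hY hle
end
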